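/- arXiv:1309.7467 — 5 statements merged into one kernel-verified Lean document; each statement's English description precedes it below -/
import Mathlib

section
/- Let F be any field and D ∈ F an element that is not a square, and let E = F(√D) be the resulting quadratic extension. Regard GL₂(F) as a subgroup of GL₂(E), let B(E) be the subgroup of invertible upper-triangular 2×2 matrices over E, and set γ₀ = [[1,0],[√D,1]]. Then GL₂(E) = B(E)·GL₂(F) ∪ B(E)·γ₀·GL₂(F), and this union is disjoint. Equivalently, under the right-multiplication action of GL₂(F) on B(E)\GL₂(E) there are exactly two orbits, represented by the identity coset B(E) and by B(E)γ₀. -/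
lemma factor_lemma {E : Type*} [Field E] (m k : Matrix (Fin 2) (Fin 2) E) (l : E)
    (hm : m.det ≠ 0) (hk : k.det ≠ 0)
    (h0 : m 1 0 = l * k 1 0) (h1 : m 1 1 = l * k 1 1) :
    ∃ b : Matrix (Fin 2) (Fin 2) E, b 1 0 = 0 ∧ b.det ≠ 0 ∧ m = b * k := by
  refine ⟨m * k⁻¹, ?_, ?_, ?_⟩
  · have hkk : k * k⁻¹ = 1 := Matrix.mul_nonsing_inv k (Ne.isUnit hk)
    have h10 : (k * k⁻¹) 1 0 = 0 := by rw [hkk]; simp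
    rw [Matrix.mul_apply, Fin.sum_univ_two] at h10 ⊢
    rw [h0, h1]; linear_combination l * h10
  · rw [Matrix.det_mul, Matrix.det_nonsing_inv, Ring.inverse_eq_inv']
    exact mul_ne_zero hm (inv_ne_zero hk)
  · rw [Matrix.mul_assoc, Matrix.nonsing_inv_mul k (Ne.isUnit hk), Matrix.mul_one]



/-- Let `F` be a field, `D ∈ F` not a square, and `E = F(√D)` the
resulting quadratic extension (realized as: `E` a field containing `F` as a subfield,
together with an element `sqrtD` with `sqrtD² = D` generating `E` over `F`).  Regarding
`GL₂(F)` inside `GL₂(E)` and letting `B(E)` be the invertible upper-triangular matrices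
and `γ₀ = [[1,0],[√D,1]]`, every element of `GL₂(E)` lies in exactly one of the two sets
`B(E)·GL₂(F)` and `B(E)·γ₀·GL₂(F)`. -/
theorem stmt_0
    (E : Type*) [Field E] (F : Subfield E)
    (D sqrtD : E) (hDF : D ∈ F)
    (hDns : ¬ ∃ y ∈ F, y * y = D)
    (hsq : sqrtD * sqrtD = D)
    (hgen : ∀ x : E, ∃ a ∈ F, ∃ b ∈ F, x = a + b * sqrtD) :
    ∀ g : Matrix (Fin 2) (Fin 2) E, g.det ≠ 0 →
      Xor'
        (∃ b h : Matrix (Fin 2) (Fin 2) E,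
          b 1 0 = 0 ∧ b.det ≠ 0 ∧ (∀ i j, h i j ∈ F) ∧ h.det ≠ 0 ∧ g = b * h)
        (∃ b h : Matrix (Fin 2) (Fin 2) E,
          b 1 0 = 0 ∧ b.det ≠ 0 ∧ (∀ i j, h i j ∈ F) ∧ h.det ≠ 0 ∧
            g = b * !![1, 0; sqrtD, 1] * h) := by
  intro g hg
  have indep : ∀ a b : E, a ∈ F → b ∈ F → a + b * sqrtD = 0 → a = 0 ∧ b = 0 := by
    intro a b ha hb h
    by_cases hb0 : b = 0
    · exact ⟨by simpa [hb0] using h, hb0⟩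
    · exfalso
      apply hDns
      refine ⟨-a / b, F.div_mem (F.neg_mem ha) hb, ?_⟩
      have hs : -a / b = sqrtD := by
        field_simp
        linear_combination -h
      rw [hs]; exact hsq
  set P1 := (∃ b h : Matrix (Fin 2) (Fin 2) E,
          b 1 0 = 0 ∧ b.det ≠ 0 ∧ (∀ i j, h i j ∈ F) ∧ h.det ≠ 0 ∧ g = b * h) with hP1
  set P2 := (∃ b h : Matrix (Fin 2) (Fin 2) E,
          b 1 0 = 0 ∧ b.det ≠ 0 ∧ (∀ i j, h i j ∈ F) ∧ h.det ≠ 0 ∧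
            g = b * !![1, 0; sqrtD, 1] * h) with hP2
  have extract1 : P1 → ∃ l x y : E, l ≠ 0 ∧ x ∈ F ∧ y ∈ F ∧ ¬(x = 0 ∧ y = 0) ∧
      g 1 0 = l * x ∧ g 1 1 = l * y := by
    rintro ⟨b, h, hb10, hbdet, hhF, hhdet, hgeq⟩
    refine ⟨b 1 1, h 1 0, h 1 1, ?_, hhF 1 0, hhF 1 1, ?_, ?_, ?_⟩
    · intro h0; apply hbdet; rw [Matrix.det_fin_two, hb10, h0]; ring
    · rintro ⟨h0, h1⟩; apply hhdet; rw [Matrix.det_fin_two, h0, h1]; ring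
    · rw [hgeq, Matrix.mul_apply, Fin.sum_univ_two, hb10]; ring
    · rw [hgeq, Matrix.mul_apply, Fin.sum_univ_two, hb10]; ring
  have extract2 : P2 → ∃ l x' y' z' w' : E, l ≠ 0 ∧ x' ∈ F ∧ y' ∈ F ∧ z' ∈ F ∧ w' ∈ F ∧
      x' * w' - y' * z' ≠ 0 ∧
      g 1 0 = l * (sqrtD * x' + z') ∧ g 1 1 = l * (sqrtD * y' + w') := by
    rintro ⟨b, h, hb10, hbdet, hhF, hhdet, hgeq⟩
    refine ⟨b 1 1, h 0 0, h 0 1, h 1 0, h 1 1, ?_, hhF 0 0, hhF 0 1, hhF 1 0, hhF 1 1,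
      ?_, ?_, ?_⟩
    · intro h0; apply hbdet; rw [Matrix.det_fin_two, hb10, h0]; ring
    · intro h0; apply hhdet; rw [Matrix.det_fin_two]; linear_combination h0
    · rw [hgeq]; simp [Matrix.mul_apply, Fin.sum_univ_two, hb10]; ring
    · rw [hgeq]; simp [Matrix.mul_apply, Fin.sum_univ_two, hb10]; ring
  have hnand : ¬ (P1 ∧ P2) := by
    rintro ⟨h1, h2⟩
    obtain ⟨l, x, y, hl, hx, hy, hxy, hcx, hdy⟩ := extract1 h1
    obtain ⟨mm, x', y', z', w', hm, hx', hy', hz', hw', hdet', hc2, hd2⟩ := extract2 h2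
    have e : l * x * (mm * (sqrtD * y' + w')) = l * y * (mm * (sqrtD * x' + z')) := by
      rw [← hcx, ← hd2, ← hdy, ← hc2]; ring
    have e2 : (l * mm) * ((x * w' - y * z') + (x * y' - y * x') * sqrtD) = (l * mm) * 0 := by
      linear_combination e
    have key := mul_left_cancel₀ (mul_ne_zero hl hm) e2
    obtain ⟨e2z, e1z⟩ := indep _ _
      (F.sub_mem (F.mul_mem hx hw') (F.mul_mem hy hz'))
      (F.sub_mem (F.mul_mem hx hy') (F.mul_mem hy hx')) key
    have hx0 : x = 0 := by
      have h5 : (x' * w' - y' * z') * x = 0 := by linear_combination x' * e2z - z' * e1z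
      exact (mul_eq_zero.mp h5).resolve_left hdet'
    have hy0 : y = 0 := by
      have h5 : (x' * w' - y' * z') * y = 0 := by linear_combination y' * e2z - w' * e1z
      exact (mul_eq_zero.mp h5).resolve_left hdet'
    exact hxy ⟨hx0, hy0⟩
  have hor : P1 ∨ P2 := by
    by_cases hd0 : g 1 1 = 0
    · left
      have hc0 : g 1 0 ≠ 0 := by
        intro h0; apply hg; rw [Matrix.det_fin_two, h0, hd0]; ring
      have hk : (!![(0:E), 1; 1, 0]).det ≠ 0 := by
        rw [Matrix.det_fin_two_of]; norm_num
      obtain ⟨b, hb10, hbdet, hbeq⟩ := factor_lemma g !![(0:E), 1; 1, 0] (g 1 0) hg hk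
        (by simp) (by simp [hd0])
      refine ⟨b, _, hb10, hbdet, ?_, hk, hbeq⟩
      intro i j; fin_cases i <;> fin_cases j <;> simp [F.zero_mem, F.one_mem]
    · obtain ⟨a, haF, bb, hbF, hab⟩ := hgen (g 1 0 / g 1 1)
      have hcda : g 1 0 = g 1 1 * (a + bb * sqrtD) := by
        rw [← hab]; field_simp
      by_cases hb0 : bb = 0
      · left
        have hk : (!![(1:E), 0; a, 1]).det ≠ 0 := by
          rw [Matrix.det_fin_two_of]; norm_num
        obtain ⟨b, hb10, hbdet, hbeq⟩ := factor_lemma g !![(1:E), 0; a, 1] (g 1 1) hg hk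
          (by simp; rw [hcda, hb0]; ring) (by simp)
        refine ⟨b, _, hb10, hbdet, ?_, hk, hbeq⟩
        intro i j; fin_cases i <;> fin_cases j <;>
          simp [haF, F.one_mem, F.zero_mem]
      · right
        set k := !![(1:E), 0; sqrtD, 1] * !![bb, 0; a, 1] with hkdef
        have hk10 : k 1 0 = sqrtD * bb + a := by
          rw [hkdef]; simp [Matrix.mul_apply, Fin.sum_univ_two]
        have hk11 : k 1 1 = 1 := by
          rw [hkdef]; simp [Matrix.mul_apply, Fin.sum_univ_two]
        have hkdet : k.det ≠ 0 := by
          rw [hkdef, Matrix.det_mul, Matrix.det_fin_two_of, Matrix.det_fin_two_of]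
          simp [hb0]
        obtain ⟨b, hb10, hbdet, hbeq⟩ := factor_lemma g k (g 1 1) hg hkdet
          (by rw [hk10, hcda]; ring) (by rw [hk11]; ring)
        refine ⟨b, !![bb, 0; a, 1], hb10, hbdet, ?_, ?_, ?_⟩
        · intro i j; fin_cases i <;> fin_cases j <;>
            simp [haF, hbF, F.one_mem, F.zero_mem]
        · rw [Matrix.det_fin_two_of]; simp [hb0]
        · rw [hbeq, hkdef, Matrix.mul_assoc]
  rcases hor with h1 | h2
  · exact Or.inl ⟨h1, fun h2 => hnand ⟨h1, h2⟩⟩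
  · exact Or.inr ⟨h2, fun h1 => hnand ⟨h1, h2⟩⟩
end

section
/- Let η₁, η₂ be unramified quasi-characters of Eˣ and Φ the normalized spherical vector on GL₂(E) attached to (η₁,η₂). Let a₁, a₂ ∈ Eˣ and m ∈ E, and consider Φ(γ₀·[[a₁,m],[0,a₂]]) = Φ([[a₁,m],[a₁√D, a₂+m√D]]). Then: (1) if a₂ + m√D = 0 or v_E(a₂+m√D) ≥ v_E(a₁√D), then Φ(γ₀[[a₁,m],[0,a₂]]) = η₁(a₂/√D)·η₂(a₁√D); (2) if a₂ + m√D ≠ 0 and v_E(a₂+m√D) ≤ v_E(a₁√D), then Φ(γ₀[[a₁,m],[0,a₂]]) = η₁(a₁a₂/(a₂+m√D))·η₂(a₂+m√D). -/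
/-- `F` a nonarchimedean local field with valuation `v`, uniformizer `ϖ`
and residue cardinality `q`; `E = F(√D)` the unramified quadratic extension (odd residue
characteristic, `D` a non-square unit), `v` also denoting the valuation on `E` extending
that of `F` with `v ϖ = 1`.  For unramified quasi-characters `η₁, η₂` of `Eˣ` and `Φ` the
normalized spherical vector on `GL₂(E)` attached to `(η₁, η₂)`, the value
`Φ(γ₀·[[a₁,m],[0,a₂]])` is as computed in the two cases of the statement. -/
theorem stmt_2
    (E : Type*) [Field E] (F : Subfield E)
    (v : E → ℤ) (ϖ : E) (q : ℕ) (hq : 2 ≤ q)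
    (hϖF : ϖ ∈ F) (hϖ0 : ϖ ≠ 0) (hϖv : v ϖ = 1)
    (hvmul : ∀ x y : E, x ≠ 0 → y ≠ 0 → v (x * y) = v x + v y)
    (hvadd : ∀ x y : E, x ≠ 0 → y ≠ 0 → x + y ≠ 0 → min (v x) (v y) ≤ v (x + y))
    (hodd : (2 : E) ≠ 0 ∧ v 2 = 0)
    (D sqrtD : E) (hDF : D ∈ F) (hD0 : D ≠ 0) (hDv : v D = 0)
    (hDns : ¬ ∃ y ∈ F, y * y = D)
    (hsq : sqrtD * sqrtD = D)
    (hgen : ∀ x : E, ∃ a ∈ F, ∃ b ∈ F, x = a + b * sqrtD)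
    (hinert : ∀ a b : E, a ∈ F → b ∈ F → a ≠ 0 → b ≠ 0 →
        v (a + b * sqrtD) = min (v a) (v b))
    (η₁ η₂ : E → ℂ)
    (hη₁m : ∀ x y : E, x ≠ 0 → y ≠ 0 → η₁ (x * y) = η₁ x * η₁ y)
    (hη₂m : ∀ x y : E, x ≠ 0 → y ≠ 0 → η₂ (x * y) = η₂ x * η₂ y)
    (hη₁u : ∀ x : E, x ≠ 0 → v x = 0 → η₁ x = 1)
    (hη₂u : ∀ x : E, x ≠ 0 → v x = 0 → η₂ x = 1)
    (hη₁0 : ∀ x : E, x ≠ 0 → η₁ x ≠ 0)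
    (hη₂0 : ∀ x : E, x ≠ 0 → η₂ x ≠ 0)
    (Φ : Matrix (Fin 2) (Fin 2) E → ℂ)
    (hΦB : ∀ (b₁ b₂ n : E) (g : Matrix (Fin 2) (Fin 2) E), b₁ ≠ 0 → b₂ ≠ 0 →
        g.det ≠ 0 → Φ (!![b₁, n; 0, b₂] * g) = η₁ b₁ * η₂ b₂ * Φ g)
    (hΦK : ∀ g k : Matrix (Fin 2) (Fin 2) E, g.det ≠ 0 →
        (∀ i j, k i j = 0 ∨ 0 ≤ v (k i j)) → k.det ≠ 0 → v k.det = 0 →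
        Φ (g * k) = Φ g)
    (hΦ1 : Φ 1 = 1) :
    ∀ a₁ a₂ m : E, a₁ ∈ F → a₂ ∈ F → m ∈ F → a₁ ≠ 0 → a₂ ≠ 0 →
      ((a₂ + m * sqrtD = 0 ∨ v (a₁ * sqrtD) ≤ v (a₂ + m * sqrtD)) →
        Φ (!![1, 0; sqrtD, 1] * !![a₁, m; 0, a₂]) =
          η₁ (a₂ / sqrtD) * η₂ (a₁ * sqrtD))
      ∧
      ((a₂ + m * sqrtD ≠ 0 ∧ v (a₂ + m * sqrtD) ≤ v (a₁ * sqrtD)) →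
        Φ (!![1, 0; sqrtD, 1] * !![a₁, m; 0, a₂]) =
          η₁ (a₁ * a₂ / (a₂ + m * sqrtD)) * η₂ (a₂ + m * sqrtD)) := by
  intro a₁ a₂ m _ _ _ ha₁ ha₂
  have hs : sqrtD ≠ 0 := by
    intro h; apply hD0; rw [← hsq, h, mul_zero]
  have hv1 : v 1 = 0 := by
    have h := hvmul 1 1 one_ne_zero one_ne_zero
    rw [one_mul] at h; omega
  have hvn1 : v (-1) = 0 := by
    have h := hvmul (-1) (-1) (by norm_num) (by norm_num)
    rw [neg_mul_neg, one_mul, hv1] at h; omega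
  have hvdiv : ∀ x y : E, x ≠ 0 → y ≠ 0 → v (x / y) = v x - v y := by
    intro x y hx hy
    have h := hvmul (x / y) y (div_ne_zero hx hy) hy
    rw [div_mul_cancel₀ _ hy] at h; omega
  have key : ∀ b₁ n b₂ : E, b₁ ≠ 0 → b₂ ≠ 0 → Φ !![b₁, n; 0, b₂] = η₁ b₁ * η₂ b₂ := by
    intro b₁ n b₂ h1 h2
    have h := hΦB b₁ b₂ n 1 h1 h2 (by simp)
    rw [mul_one, hΦ1, mul_one] at h
    exact h
  set d := a₂ + m * sqrtD with hd
  set c := a₁ * sqrtD with hc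
  have hc0 : c ≠ 0 := mul_ne_zero ha₁ hs
  have ha12 : a₁ * a₂ ≠ 0 := mul_ne_zero ha₁ ha₂
  have hM : !![(1:E), 0; sqrtD, 1] * !![a₁, m; 0, a₂] = !![a₁, m; c, d] := by
    rw [Matrix.mul_fin_two]
    congr 1 <;> ring
    rw [hc, hd, add_comm a₂]
  constructor
  · intro hcase
    have hT : !![a₁, m; c, d] = !![a₁*a₂/c, a₁; 0, c] * !![0, -1; 1, d/c] := by
      rw [Matrix.mul_fin_two]
      have e1 : a₁*a₂/c * 0 + a₁ * 1 = a₁ := by ring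
      have e2 : a₁*a₂/c * (-1) + a₁ * (d/c) = m := by
        rw [hc, hd]; field_simp; ring
      have e3 : (0:E) * 0 + c * 1 = c := by ring
      have e4 : (0:E) * (-1) + c * (d/c) = d := by field_simp; ring
      rw [e1, e2, e3, e4]
    have hTdet : (!![a₁*a₂/c, a₁; 0, c] : Matrix (Fin 2) (Fin 2) E).det ≠ 0 := by
      rw [Matrix.det_fin_two_of]
      have : a₁*a₂/c * c - a₁ * 0 = a₁*a₂ := by field_simp; ring
      rw [this]; exact ha12
    have hent : ∀ i j, (!![(0:E), -1; 1, d/c] : Matrix (Fin 2) (Fin 2) E) i j = 0 ∨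
        0 ≤ v ((!![(0:E), -1; 1, d/c] : Matrix (Fin 2) (Fin 2) E) i j) := by
      intro i j
      fin_cases i <;> fin_cases j
      · exact Or.inl rfl
      · right; show (0:ℤ) ≤ v (-1); rw [hvn1]
      · right; show (0:ℤ) ≤ v 1; rw [hv1]
      · by_cases hd0 : d = 0
        · left; show d / c = 0; rw [hd0, zero_div]
        · right
          have hle : v c ≤ v d := hcase.resolve_left hd0
          show (0:ℤ) ≤ v (d / c)
          rw [hvdiv d c hd0 hc0]; omega
    have hkdet : (!![(0:E), -1; 1, d/c] : Matrix (Fin 2) (Fin 2) E).det = 1 := by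
      rw [Matrix.det_fin_two_of]; ring
    rw [hM, hT, hΦK _ _ hTdet hent (by rw [hkdet]; exact one_ne_zero) (by rw [hkdet, hv1]),
      key _ _ _ (div_ne_zero ha12 hc0) hc0]
    have harg : a₁*a₂/c = a₂ / sqrtD := by
      rw [hc]; field_simp
    rw [harg, hc]
  · rintro ⟨hd0, hle⟩
    have hT : !![a₁, m; c, d] = !![a₁*a₂/d, m; 0, d] * !![1, 0; c/d, 1] := by
      rw [Matrix.mul_fin_two]
      have e1 : a₁*a₂/d * 1 + m * (c/d) = a₁ := by
        rw [hc]
        field_simp; rw [hd]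
      have e2 : a₁*a₂/d * 0 + m * 1 = m := by ring
      have e3 : (0:E) * 1 + d * (c/d) = c := by field_simp; ring
      have e4 : (0:E) * 0 + d * 1 = d := by ring
      rw [e1, e2, e3, e4]
    have hTdet : (!![a₁*a₂/d, m; 0, d] : Matrix (Fin 2) (Fin 2) E).det ≠ 0 := by
      rw [Matrix.det_fin_two_of]
      have : a₁*a₂/d * d - m * 0 = a₁*a₂ := by field_simp; ring
      rw [this]; exact ha12
    have hent : ∀ i j, (!![(1:E), 0; c/d, 1] : Matrix (Fin 2) (Fin 2) E) i j = 0 ∨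
        0 ≤ v ((!![(1:E), 0; c/d, 1] : Matrix (Fin 2) (Fin 2) E) i j) := by
      intro i j
      fin_cases i <;> fin_cases j
      · right; show (0:ℤ) ≤ v 1; rw [hv1]
      · exact Or.inl rfl
      · right; show (0:ℤ) ≤ v (c / d); rw [hvdiv c d hc0 hd0]; omega
      · right; show (0:ℤ) ≤ v 1; rw [hv1]
    have hkdet : (!![(1:E), 0; c/d, 1] : Matrix (Fin 2) (Fin 2) E).det = 1 := by
      rw [Matrix.det_fin_two_of]; ring
    rw [hM, hT, hΦK _ _ hTdet hent (by rw [hkdet]; exact one_ne_zero) (by rw [hkdet, hv1]),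
      key _ _ _ (div_ne_zero ha12 hd0) hd0]
end

section
/- Let c ≥ 1, α ∈ Fˣ, m ∈ F, and 0 ≤ i, j ≤ c. Set M = [[ϖʲ, 1],[−α−mϖʲ, −m]] (so det M = α and M = ω·[[1,m],[0,1]]·[[α,0],[0,1]]·[[1,0],[ϖʲ,1]] with ω = [[0,1],[−1,0]]). Then M ∈ B(F)·[[1,0],[ϖⁱ,1]]·K₁(ϖᶜ) if and only if the following holds. Case i = 0: if j = 0, m ∉ α·(−1+ϖO); if 0 < j ≤ c, m ∈ αO. Case i = c: if 0 ≤ j < c, m ∈ αϖ^{−j}·(−1+ϖ^{c−j}O); if j = c, m ≠ 0 and α ∈ mϖᶜO. Case 0 < i < c: if 0 ≤ j < i, m ∈ αϖ^{−j}·(−1+ϖ^{i−j}Oˣ); if j = i, m ≠ 0, α ∈ mϖⁱO, and m ∉ αϖ^{−i}·(−1+ϖO); if i < j ≤ c, m ∈ αϖ^{−i}Oˣ. -/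
namespace Stmt8
variable {F : Type*} [Field F] {v : F → ℤ}

def Hmul (v : F → ℤ) : Prop := ∀ x y : F, x ≠ 0 → y ≠ 0 → v (x * y) = v x + v y
def Hadd (v : F → ℤ) : Prop := ∀ x y : F, x ≠ 0 → y ≠ 0 → x + y ≠ 0 → min (v x) (v y) ≤ v (x + y)

lemma v_one (hm : Hmul v) : v (1 : F) = 0 := by
  have := hm 1 1 one_ne_zero one_ne_zero
  simp at this; omega

lemma v_neg (hm : Hmul v) {x : F} (hx : x ≠ 0) : v (-x) = v x := by
  have h1 : v ((-1 : F)) = 0 := by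
    have := hm (-1) (-1) (by norm_num) (by norm_num)
    simp [v_one hm] at this; omega
  have := hm (-1) x (by norm_num) hx
  simp only [neg_one_mul] at this; omega

lemma v_inv (hm : Hmul v) {x : F} (hx : x ≠ 0) : v x⁻¹ = - v x := by
  have := hm x x⁻¹ hx (inv_ne_zero hx)
  rw [mul_inv_cancel₀ hx, v_one hm] at this; omega

lemma v_zpow (hm : Hmul v) {ϖ : F} (hϖ0 : ϖ ≠ 0) (hϖv : v ϖ = 1) : ∀ n : ℤ, v (ϖ ^ n) = n := by
  have hpos : ∀ n : ℕ, v (ϖ ^ (n : ℤ)) = n := by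
    intro n
    induction n with
    | zero => simpa using v_one hm
    | succ k ih =>
      rw [show ((k+1 : ℕ) : ℤ) = (k : ℤ) + 1 by push_cast; ring, zpow_add₀ hϖ0,
        hm _ _ (zpow_ne_zero _ hϖ0) (by simpa using hϖ0), ih, zpow_one, hϖv]
  intro n
  rcases le_or_gt 0 n with h | h
  · obtain ⟨k, rfl⟩ := Int.eq_ofNat_of_zero_le h
    exact hpos k
  · obtain ⟨k, hk⟩ : ∃ k : ℕ, n = -(k : ℤ) := ⟨n.natAbs, by omega⟩
    subst hk
    rw [zpow_neg, v_inv hm (zpow_ne_zero _ hϖ0), hpos k]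

/-- ultrametric: strictly smaller valuation wins -/
lemma v_add_lt (hm : Hmul v) (ha : Hadd v) {x y : F} (hx : x ≠ 0) (hy : y ≠ 0)
    (h : v x < v y) : x + y ≠ 0 ∧ v (x + y) = v x := by
  have hxy : x + y ≠ 0 := by
    intro h0
    have hyx : y = -x := by linear_combination h0
    rw [hyx, v_neg hm hx] at h; omega
  refine ⟨hxy, le_antisymm ?_ ?_⟩
  · have h2 := ha (x + y) (-y) hxy (neg_ne_zero.mpr hy) (by simpa using hx)
    rw [add_neg_cancel_right, v_neg hm hy] at h2
    omega
  · have := ha x y hx hy hxy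
    omega

lemma v_add_ge' (hm : Hmul v) (ha : Hadd v) {x y : F} (n : ℤ)
    (hx : x = 0 ∨ n ≤ v x) (hy : y = 0 ∨ n ≤ v y) :
    x + y = 0 ∨ (x + y ≠ 0 ∧ n ≤ v (x + y)) := by
  rcases eq_or_ne (x + y) 0 with h | h
  · exact Or.inl h
  · right
    refine ⟨h, ?_⟩
    rcases hx with rfl | hx
    · rw [zero_add] at h ⊢
      exact hy.resolve_left h
    rcases hy with rfl | hy
    · rw [add_zero] at h ⊢
      exact hx
    rcases eq_or_ne x 0 with rfl | hx0
    · rw [zero_add] at h ⊢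
      rcases eq_or_ne y 0 with rfl | hy0
      · exact absurd rfl h
      · exact hy
    rcases eq_or_ne y 0 with rfl | hy0
    · rw [add_zero]
      exact hx
    have := ha x y hx0 hy0 h
    omega

lemma v_add_ge (hm : Hmul v) (ha : Hadd v) {x y : F} (n : ℤ)
    (hx : x = 0 ∨ n ≤ v x) (hy : y = 0 ∨ n ≤ v y) :
    x + y = 0 ∨ n ≤ v (x + y) := by
  rcases hx with rfl | hx
  · simpa using hy
  rcases hy with rfl | hy
  · rw [add_zero]; exact Or.inr hx
  rcases eq_or_ne (x + y) 0 with h | h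
  · exact Or.inl h
  · right
    rcases eq_or_ne x 0 with rfl | hx0
    · simpa using hy
    rcases eq_or_ne y 0 with rfl | hy0
    · simpa using hx
    have := ha x y hx0 hy0 h
    omega


def PairCond (v : F → ℤ) (ϖ : F) (c i : ℤ) (x y : F) : Prop :=
  ∃ lam k00 k01 k10 k11 : F, lam ≠ 0 ∧
    (k00 = 0 ∨ 0 ≤ v k00) ∧ (k01 = 0 ∨ 0 ≤ v k01) ∧ (k10 = 0 ∨ 0 ≤ v k10) ∧
    (k11 = 0 ∨ 0 ≤ v k11) ∧
    k00 * k11 - k01 * k10 ≠ 0 ∧ v (k00 * k11 - k01 * k10) = 0 ∧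
    (k10 = 0 ∨ c ≤ v k10) ∧ (k11 - 1 = 0 ∨ c ≤ v (k11 - 1)) ∧
    x = lam * (ϖ ^ i * k00 + k10) ∧ y = lam * (ϖ ^ i * k01 + k11)

lemma mem_iff (v : F → ℤ) (ϖ : F) (c i j : ℤ) (α m : F) (hα : α ≠ 0) :
    (∃ b k : Matrix (Fin 2) (Fin 2) F,
        b 1 0 = 0 ∧ b.det ≠ 0 ∧
        (∀ i' j', k i' j' = 0 ∨ 0 ≤ v (k i' j')) ∧ k.det ≠ 0 ∧ v k.det = 0 ∧
        (k 1 0 = 0 ∨ c ≤ v (k 1 0)) ∧ (k 1 1 - 1 = 0 ∨ c ≤ v (k 1 1 - 1)) ∧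
        !![ϖ ^ j, 1; -α - m * ϖ ^ j, -m] = b * !![1, 0; ϖ ^ i, 1] * k) ↔
    PairCond v ϖ c i (-α - m * ϖ ^ j) (-m) := by
  constructor
  · rintro ⟨b, k, hb, hdb, hint, hdk, hvdk, hk10, hk11, heq⟩
    rw [Matrix.det_fin_two, hb, mul_zero, sub_zero] at hdb
    rw [Matrix.det_fin_two] at hdk hvdk
    have e10 := congrFun (congrFun heq 1) 0
    have e11 := congrFun (congrFun heq 1) 1
    simp [Matrix.mul_apply, Fin.sum_univ_two, hb] at e10 e11
    exact ⟨b 1 1, k 0 0, k 0 1, k 1 0, k 1 1, right_ne_zero_of_mul hdb,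
      hint 0 0, hint 0 1, hint 1 0, hint 1 1, hdk, hvdk, hk10, hk11,
      by rw [e10]; ring, by rw [e11]; ring⟩
  · rintro ⟨lam, k00, k01, k10, k11, hlam, h00, h01, h10, h11, hD, hvD, hc10, hc11, hx, hy⟩
    have hE : k11 * k00 - k10 * k01 ≠ 0 := fun h => hD (by linear_combination h)
    have heq : !![ϖ ^ j, 1; -α - m * ϖ ^ j, -m] =
        !![(ϖ ^ j * k11 - k10) / (k00 * k11 - k01 * k10)
            - (k00 - ϖ ^ j * k01) / (k00 * k11 - k01 * k10) * ϖ ^ i,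
           (k00 - ϖ ^ j * k01) / (k00 * k11 - k01 * k10); 0, lam] *
          !![1, 0; ϖ ^ i, 1] * !![k00, k01; k10, k11] := by
      ext i' j'
      fin_cases i' <;> fin_cases j' <;> simp [Matrix.mul_apply, Fin.sum_univ_two]
      · field_simp [hE]; ring
      · field_simp [hE]; ring
      · linear_combination hx
      · linear_combination hy
    have hdb : Matrix.det !![(ϖ ^ j * k11 - k10) / (k00 * k11 - k01 * k10)
            - (k00 - ϖ ^ j * k01) / (k00 * k11 - k01 * k10) * ϖ ^ i,
           (k00 - ϖ ^ j * k01) / (k00 * k11 - k01 * k10); 0, lam] ≠ 0 := by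
      intro h
      have hdet := congrArg Matrix.det heq
      rw [Matrix.det_mul, Matrix.det_mul, h, zero_mul, zero_mul] at hdet
      rw [Matrix.det_fin_two_of] at hdet
      exact hα (by linear_combination hdet)
    refine ⟨_, _, by simp, hdb, ?_, ?_, ?_, ?_, ?_, heq⟩
    · intro i' j'; fin_cases i' <;> fin_cases j' <;> simp <;> tauto
    · rw [Matrix.det_fin_two_of]; exact hD
    · rw [Matrix.det_fin_two_of]; exact hvD
    · simpa using hc10
    · simpa using hc11

lemma k_units (hm : Hmul v) (ha : Hadd v) (hc : 1 ≤ c) {k00 k01 k10 k11 : F}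
    (h01 : k01 = 0 ∨ 0 ≤ v k01)
    (hD : k00 * k11 - k01 * k10 ≠ 0) (hvD : v (k00 * k11 - k01 * k10) = 0)
    (hc10 : k10 = 0 ∨ c ≤ v k10) (hc11 : k11 - 1 = 0 ∨ c ≤ v (k11 - 1)) :
    k00 ≠ 0 ∧ v k00 = 0 ∧ k11 ≠ 0 ∧ v k11 = 0 := by
  have h11 : k11 ≠ 0 ∧ v k11 = 0 := by
    rcases eq_or_ne (k11 - 1) 0 with h | h1
    · have : k11 = 1 := by linear_combination h
      rw [this]; exact ⟨one_ne_zero, v_one hm⟩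
    · have h : c ≤ v (k11 - 1) := hc11.resolve_left h1
      have := v_add_lt hm ha (x := 1) (y := k11 - 1) one_ne_zero h1
        (by rw [v_one hm]; omega)
      rw [v_one hm] at this
      have e : 1 + (k11 - 1) = k11 := by ring
      rw [e] at this
      exact this
  have hmain : k00 * k11 ≠ 0 ∧ v (k00 * k11) = 0 := by
    have e : k00 * k11 = (k00 * k11 - k01 * k10) + k01 * k10 := by ring
    rcases eq_or_ne (k01 * k10) 0 with h | h
    · have e2 : k00 * k11 = k00 * k11 - k01 * k10 := by rw [h]; ring
      rw [e2]; exact ⟨hD, hvD⟩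
    · have hk01 : k01 ≠ 0 := fun h0 => h (by rw [h0, zero_mul])
      have hk10 : k10 ≠ 0 := fun h0 => h (by rw [h0, mul_zero])
      have hv : v (k01 * k10) ≥ 1 := by
        rw [hm _ _ hk01 hk10]
        rcases h01 with h0 | h0; · exact absurd h0 hk01
        rcases hc10 with h0 | h0; · exact absurd h0 hk10
        omega
      have := v_add_lt hm ha hD h (by omega)
      rw [← e] at this
      exact ⟨this.1, by rw [this.2, hvD]⟩
  have hk00 : k00 ≠ 0 := fun h0 => hmain.1 (by rw [h0, zero_mul])
  refine ⟨hk00, ?_, h11.1, h11.2⟩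
  have := hm _ _ hk00 h11.1
  omega



lemma pairCond_zero (hm : Hmul v) (ha : Hadd v) {ϖ : F} (hϖ0 : ϖ ≠ 0) (hϖv : v ϖ = 1)
    {c : ℤ} (hc : 1 ≤ c) (x y : F) :
    PairCond v ϖ c 0 x y ↔ x ≠ 0 ∧ (y = 0 ∨ v x ≤ v y) := by
  constructor
  · rintro ⟨lam, k00, k01, k10, k11, hlam, h00, h01, h10, h11, hD, hvD, hc10, hc11, hx, hy⟩
    obtain ⟨hk00, hv00, hk11, hv11⟩ := k_units hm ha hc h01 hD hvD hc10 hc11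
    rw [zpow_zero, one_mul] at hx hy
    have hX : k00 + k10 ≠ 0 ∧ v (k00 + k10) = 0 := by
      rcases eq_or_ne k10 0 with rfl | h
      · simpa using ⟨hk00, hv00⟩
      · have hcv : c ≤ v k10 := hc10.resolve_left h
        have := v_add_lt hm ha (x := k00) (y := k10) hk00 h (by omega)
        exact ⟨this.1, by omega⟩
    have hxne : x ≠ 0 := by rw [hx]; exact mul_ne_zero hlam hX.1
    refine ⟨hxne, ?_⟩
    have hvx : v x = v lam := by rw [hx, hm _ _ hlam hX.1, hX.2, add_zero]
    rcases eq_or_ne (k01 + k11) 0 with h | h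
    · left; rw [hy, h, mul_zero]
    · right
      have hvY : 0 ≤ v (k01 + k11) := by
        rcases v_add_ge hm ha (x := k01) (y := k11) 0 h01 (Or.inr hv11.ge) with h0 | h0
        · exact absurd h0 h
        · exact h0
      rw [hy, hm _ _ hlam h, hvx]; omega
  · rintro ⟨hx, hy⟩
    refine ⟨x, 1, y / x - 1, 0, 1, hx, Or.inr (by rw [v_one hm]), ?_, Or.inl rfl,
      Or.inr (by rw [v_one hm]), by norm_num, by rw [show (1:F)*1 - (y/x-1)*0 = 1 by ring, v_one hm],
      Or.inl rfl, Or.inl (by ring), by rw [zpow_zero]; ring, ?_⟩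
    · -- y/x - 1 integral
      have hneg1 : (0:F) / x - 1 = 0 ∨ 0 ≤ v ((0:F) / x - 1) := by
        right
        rw [zero_div, zero_sub, v_neg hm one_ne_zero, v_one hm]
      rcases hy with rfl | hy
      · exact hneg1
      · rcases eq_or_ne y 0 with rfl | hy0
        · exact hneg1
        · have : v (y / x) = v y - v x := by
            rw [div_eq_mul_inv, hm _ _ hy0 (inv_ne_zero hx), v_inv hm hx]; omega
          have := v_add_ge hm ha 0 (Or.inr (by omega : (0:ℤ) ≤ v (y/x)))
            (Or.inr (by rw [v_neg hm one_ne_zero, v_one hm] : (0:ℤ) ≤ v (-1:F)))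
          simpa [sub_eq_add_neg] using this
    · rw [zpow_zero]; field_simp; ring

lemma pairCond_mid (hm : Hmul v) (ha : Hadd v) {ϖ : F} (hϖ0 : ϖ ≠ 0) (hϖv : v ϖ = 1)
    {c i : ℤ} (hi : 0 < i) (hic : i < c) (x y : F) :
    PairCond v ϖ c i x y ↔ x ≠ 0 ∧ y ≠ 0 ∧ v x = v y + i := by
  have hπ : ∀ n : ℤ, ϖ ^ n ≠ 0 := fun n => zpow_ne_zero n hϖ0
  have hc : 1 ≤ c := by omega
  constructor
  · rintro ⟨lam, k00, k01, k10, k11, hlam, h00, h01, h10, h11, hD, hvD, hc10, hc11, hx, hy⟩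
    obtain ⟨hk00, hv00, hk11, hv11⟩ := k_units hm ha hc h01 hD hvD hc10 hc11
    have hv0i : v (ϖ ^ i * k00) = i := by
      rw [hm _ _ (hπ i) hk00, v_zpow hm hϖ0 hϖv]; omega
    have hX : ϖ ^ i * k00 + k10 ≠ 0 ∧ v (ϖ ^ i * k00 + k10) = i := by
      rcases eq_or_ne k10 0 with rfl | h
      · rw [add_zero]; exact ⟨mul_ne_zero (hπ i) hk00, hv0i⟩
      · have hcv : c ≤ v k10 := hc10.resolve_left h
        have := v_add_lt hm ha (x := ϖ ^ i * k00) (y := k10)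
          (mul_ne_zero (hπ i) hk00) h (by omega)
        exact ⟨this.1, by omega⟩
    have hY : ϖ ^ i * k01 + k11 ≠ 0 ∧ v (ϖ ^ i * k01 + k11) = 0 := by
      rcases eq_or_ne k01 0 with rfl | h
      · rw [mul_zero, zero_add]; exact ⟨hk11, hv11⟩
      · have hv01 : v (ϖ ^ i * k01) = i + v k01 := by
          rw [hm _ _ (hπ i) h, v_zpow hm hϖ0 hϖv]
        have h01' : 0 ≤ v k01 := h01.resolve_left h
        have := v_add_lt hm ha (x := k11) (y := ϖ ^ i * k01)
          hk11 (mul_ne_zero (hπ i) h) (by omega)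
        rw [add_comm] at this
        exact ⟨this.1, by omega⟩
    refine ⟨by rw [hx]; exact mul_ne_zero hlam hX.1, by rw [hy]; exact mul_ne_zero hlam hY.1, ?_⟩
    rw [hx, hy, hm _ _ hlam hX.1, hm _ _ hlam hY.1]
    omega
  · rintro ⟨hx, hy, hv⟩
    have hk00 : x / (y * ϖ ^ i) ≠ 0 := div_ne_zero hx (mul_ne_zero hy (hπ i))
    have hv00 : v (x / (y * ϖ ^ i)) = 0 := by
      rw [div_eq_mul_inv, hm _ _ hx (inv_ne_zero (mul_ne_zero hy (hπ i))),
        v_inv hm (mul_ne_zero hy (hπ i)), hm _ _ hy (hπ i), v_zpow hm hϖ0 hϖv]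
      omega
    refine ⟨y, x / (y * ϖ ^ i), 0, 0, 1, hy, Or.inr hv00.ge, Or.inl rfl, Or.inl rfl,
      Or.inr (by rw [v_one hm]), ?_, ?_, Or.inl rfl, Or.inl (by ring), ?_, by ring⟩
    · rw [show x / (y * ϖ ^ i) * 1 - 0 * 0 = x / (y * ϖ ^ i) by ring]; exact hk00
    · rw [show x / (y * ϖ ^ i) * 1 - 0 * 0 = x / (y * ϖ ^ i) by ring]; exact hv00
    · rw [add_zero, show y * (ϖ ^ i * (x / (y * ϖ ^ i))) = x / (y * ϖ ^ i) * (y * ϖ ^ i) by ring,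
        div_mul_cancel₀ _ (mul_ne_zero hy (hπ i))]

lemma pairCond_top (hm : Hmul v) (ha : Hadd v) {ϖ : F} (hϖ0 : ϖ ≠ 0) (hϖv : v ϖ = 1)
    {c : ℤ} (hc : 1 ≤ c) (x y : F) :
    PairCond v ϖ c c x y ↔ y ≠ 0 ∧ (x = 0 ∨ v y + c ≤ v x) := by
  have hπ : ∀ n : ℤ, ϖ ^ n ≠ 0 := fun n => zpow_ne_zero n hϖ0
  constructor
  · rintro ⟨lam, k00, k01, k10, k11, hlam, h00, h01, h10, h11, hD, hvD, hc10, hc11, hx, hy⟩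
    obtain ⟨hk00, hv00, hk11, hv11⟩ := k_units hm ha hc h01 hD hvD hc10 hc11
    have hY : ϖ ^ c * k01 + k11 ≠ 0 ∧ v (ϖ ^ c * k01 + k11) = 0 := by
      rcases eq_or_ne k01 0 with rfl | h
      · rw [mul_zero, zero_add]; exact ⟨hk11, hv11⟩
      · have hv01 : v (ϖ ^ c * k01) = c + v k01 := by
          rw [hm _ _ (hπ c) h, v_zpow hm hϖ0 hϖv]
        have h01' : 0 ≤ v k01 := h01.resolve_left h
        have := v_add_lt hm ha (x := k11) (y := ϖ ^ c * k01)
          hk11 (mul_ne_zero (hπ c) h) (by omega)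
        rw [add_comm] at this
        exact ⟨this.1, by omega⟩
    refine ⟨by rw [hy]; exact mul_ne_zero hlam hY.1, ?_⟩
    have hvy : v y = v lam := by rw [hy, hm _ _ hlam hY.1, hY.2, add_zero]
    have hX : ϖ ^ c * k00 + k10 = 0 ∨ (ϖ ^ c * k00 + k10 ≠ 0 ∧ c ≤ v (ϖ ^ c * k00 + k10)) := by
      refine v_add_ge' hm ha c (Or.inr ?_) hc10
      rw [hm _ _ (hπ c) hk00, v_zpow hm hϖ0 hϖv]; omega
    rcases hX with h | ⟨hXne, h⟩
    · left; rw [hx, h, mul_zero]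
    · right
      rw [hx, hm _ _ hlam hXne]; omega
  · rintro ⟨hy, hx⟩
    have hq : x / y = 0 ∨ c ≤ v (x / y) := by
      rcases eq_or_ne x 0 with rfl | hx0
      · left; exact zero_div y
      · right
        have hx' : v y + c ≤ v x := hx.resolve_left hx0
        rw [div_eq_mul_inv, hm _ _ hx0 (inv_ne_zero hy), v_inv hm hy]; omega
    have hk10 : x / y - ϖ ^ c = 0 ∨ c ≤ v (x / y - ϖ ^ c) := by
      have := v_add_ge hm ha (x := x / y) (y := -(ϖ ^ c)) c hq
        (Or.inr (by rw [v_neg hm (hπ c), v_zpow hm hϖ0 hϖv]))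
      simpa [sub_eq_add_neg] using this
    refine ⟨y, 1, 0, x / y - ϖ ^ c, 1, hy, Or.inr (by rw [v_one hm]), Or.inl rfl,
      ?_, Or.inr (by rw [v_one hm]),
      by rw [show (1:F)*1 - 0*(x/y - ϖ^c) = 1 by ring]; exact one_ne_zero,
      by rw [show (1:F)*1 - 0*(x/y - ϖ^c) = 1 by ring, v_one hm],
      hk10, Or.inl (by ring), ?_, by ring⟩
    · rcases hk10 with h | h
      · exact Or.inl h
      · exact Or.inr (by omega)
    · rw [show ϖ ^ c * 1 + (x / y - ϖ ^ c) = x / y by ring,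
        show y * (x / y) = x / y * y by ring, div_mul_cancel₀ _ hy]

lemma exists_t_iff {α m W : F} (hα : α ≠ 0) (hW : W ≠ 0) (P : F → Prop) :
    (∃ t, P t ∧ m = α * W⁻¹ * (-1 + t)) ↔ P ((α + m * W) / α) := by
  constructor
  · rintro ⟨t, hP, hmt⟩
    have ht : t = (α + m * W) / α := by
      field_simp
      field_simp at hmt
      linear_combination -hmt
    rwa [← ht]
  · intro hP
    refine ⟨_, hP, ?_⟩
    field_simp
    ring

lemma case_i0_j0 (hm : Hmul v) (ha : Hadd v) {α m : F} (hα : α ≠ 0) :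
    (α + m ≠ 0 ∧ (m = 0 ∨ v (α + m) ≤ v m)) ↔
      ¬ ∃ t : F, (t = 0 ∨ 1 ≤ v t) ∧ m = α * (-1 + t) := by
  have key : (∃ t : F, (t = 0 ∨ 1 ≤ v t) ∧ m = α * (-1 + t)) ↔
      ((α + m) / α = 0 ∨ 1 ≤ v ((α + m) / α)) := by
    have := exists_t_iff (m := m) hα one_ne_zero (fun t => t = 0 ∨ 1 ≤ v t)
    simp only [inv_one, mul_one] at this
    exact this
  rw [key, div_eq_zero_iff, or_iff_left hα]
  constructor
  · rintro ⟨hne, hcase⟩ (h | h)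
    · exact hne h
    · have hv : v ((α + m) / α) = v (α + m) - v α := by
        rw [div_eq_mul_inv, hm _ _ hne (inv_ne_zero hα), v_inv hm hα]; omega
      rw [hv] at h
      rcases hcase with rfl | hvm
      · rw [add_zero] at h hne; omega
      · rcases eq_or_ne m 0 with rfl | hm0
        · rw [add_zero] at h hne; omega
        · have h2 := ha (α + m) (-m) hne (neg_ne_zero.mpr hm0)
            (by rw [show α + m + -m = α by ring]; exact hα)
          rw [show α + m + -m = α by ring, v_neg hm hm0] at h2
          omega
  · intro hno
    have hne : α + m ≠ 0 := by
      intro h0; exact hno (Or.inl h0)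
    refine ⟨hne, ?_⟩
    have hv : v ((α + m) / α) = v (α + m) - v α := by
      rw [div_eq_mul_inv, hm _ _ hne (inv_ne_zero hα), v_inv hm hα]; omega
    have hle : v (α + m) ≤ v α := by
      by_contra hgt
      exact hno (Or.inr (by omega))
    rcases eq_or_ne m 0 with rfl | hm0
    · exact Or.inl rfl
    · right
      have h2 := ha (α + m) (-α) hne (neg_ne_zero.mpr hα)
        (by rw [show α + m + -α = m by ring]; exact hm0)
      rw [show α + m + -α = m by ring, v_neg hm hα] at h2
      omega

lemma case_i0_jpos (hm : Hmul v) (ha : Hadd v) {ϖ : F} (hϖ0 : ϖ ≠ 0) (hϖv : v ϖ = 1)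
    {j : ℤ} (hj : 0 < j) {α m : F} (hα : α ≠ 0) :
    (α + m * ϖ ^ j ≠ 0 ∧ (m = 0 ∨ v (α + m * ϖ ^ j) ≤ v m)) ↔ (m = 0 ∨ v α ≤ v m) := by
  have hW : ϖ ^ j ≠ 0 := zpow_ne_zero j hϖ0
  rcases eq_or_ne m 0 with rfl | hm0
  · simp [hα]
  have hvmj : v (m * ϖ ^ j) = v m + j := by
    rw [hm _ _ hm0 hW, v_zpow hm hϖ0 hϖv]
  constructor
  · rintro ⟨hne, h⟩
    rcases h with h | h
    · exact absurd h hm0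
    right
    by_contra hgt
    push_neg at hgt
    have h2 := ha α (m * ϖ ^ j) hα (mul_ne_zero hm0 hW) hne
    omega
  · rintro (h | h)
    · exact absurd h hm0
    have := v_add_lt hm ha (x := α) (y := m * ϖ ^ j) hα (mul_ne_zero hm0 hW) (by omega)
    exact ⟨this.1, Or.inr (by omega)⟩

lemma case_ic_jlt (hm : Hmul v) (ha : Hadd v) {ϖ : F} (hϖ0 : ϖ ≠ 0) (hϖv : v ϖ = 1)
    {c j : ℤ} (hjc : j < c) {α m : F} (hα : α ≠ 0) :
    (m ≠ 0 ∧ (α + m * ϖ ^ j = 0 ∨ v m + c ≤ v (α + m * ϖ ^ j))) ↔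
      ∃ t : F, (t = 0 ∨ c - j ≤ v t) ∧ m = α * ϖ ^ (-j) * (-1 + t) := by
  have hW : ϖ ^ j ≠ 0 := zpow_ne_zero j hϖ0
  have key : (∃ t : F, (t = 0 ∨ c - j ≤ v t) ∧ m = α * ϖ ^ (-j) * (-1 + t)) ↔
      ((α + m * ϖ ^ j) / α = 0 ∨ c - j ≤ v ((α + m * ϖ ^ j) / α)) := by
    rw [← exists_t_iff (m := m) (W := ϖ ^ j) hα hW (fun t => t = 0 ∨ c - j ≤ v t)]
    simp_rw [zpow_neg]
  rw [key, div_eq_zero_iff, or_iff_left hα]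
  constructor
  · rintro ⟨hm0, h⟩
    rcases eq_or_ne (α + m * ϖ ^ j) 0 with h0 | hAne
    · exact Or.inl h0
    right
    have h' := h.resolve_left hAne
    have hvmj : v (m * ϖ ^ j) = v m + j := by rw [hm _ _ hm0 hW, v_zpow hm hϖ0 hϖv]
    have h2 := v_add_lt hm ha (x := -(m * ϖ ^ j)) (y := α + m * ϖ ^ j)
      (neg_ne_zero.mpr (mul_ne_zero hm0 hW)) hAne
      (by rw [v_neg hm (mul_ne_zero hm0 hW)]; omega)
    rw [show -(m * ϖ ^ j) + (α + m * ϖ ^ j) = α by ring,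
      v_neg hm (mul_ne_zero hm0 hW)] at h2
    have hdiv : v ((α + m * ϖ ^ j) / α) = v (α + m * ϖ ^ j) - v α := by
      rw [div_eq_mul_inv, hm _ _ hAne (inv_ne_zero hα), v_inv hm hα]; omega
    omega
  · intro h
    rcases eq_or_ne (α + m * ϖ ^ j) 0 with hA0 | hAne
    · have hm0 : m ≠ 0 := by
        rintro rfl
        rw [zero_mul, add_zero] at hA0
        exact hα hA0
      exact ⟨hm0, Or.inl hA0⟩
    have h' := h.resolve_left hAne
    have hdiv : v ((α + m * ϖ ^ j) / α) = v (α + m * ϖ ^ j) - v α := by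
      rw [div_eq_mul_inv, hm _ _ hAne (inv_ne_zero hα), v_inv hm hα]; omega
    have hm0 : m ≠ 0 := by
      rintro rfl
      rw [zero_mul, add_zero] at h' hdiv
      rw [div_self hα, v_one hm] at h'
      omega
    have h2 := v_add_lt hm ha (x := -α) (y := α + m * ϖ ^ j) (neg_ne_zero.mpr hα) hAne
      (by rw [v_neg hm hα]; omega)
    rw [show -α + (α + m * ϖ ^ j) = m * ϖ ^ j by ring, v_neg hm hα] at h2
    have hvmj : v (m * ϖ ^ j) = v m + j := by rw [hm _ _ hm0 hW, v_zpow hm hϖ0 hϖv]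
    exact ⟨hm0, Or.inr (by omega)⟩

lemma case_ic_jc (hm : Hmul v) (ha : Hadd v) {ϖ : F} (hϖ0 : ϖ ≠ 0) (hϖv : v ϖ = 1)
    {c : ℤ} {α m : F} (hα : α ≠ 0) :
    (m ≠ 0 ∧ (α + m * ϖ ^ c = 0 ∨ v m + c ≤ v (α + m * ϖ ^ c))) ↔
      (m ≠ 0 ∧ v m ≤ v α - c) := by
  have hW : ϖ ^ c ≠ 0 := zpow_ne_zero c hϖ0
  constructor
  · rintro ⟨hm0, h⟩
    have hvmj : v (m * ϖ ^ c) = v m + c := by rw [hm _ _ hm0 hW, v_zpow hm hϖ0 hϖv]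
    refine ⟨hm0, ?_⟩
    rcases eq_or_ne (α + m * ϖ ^ c) 0 with h0 | hAne
    · have : α = -(m * ϖ ^ c) := by linear_combination h0
      rw [this, v_neg hm (mul_ne_zero hm0 hW)]
      omega
    have h' := h.resolve_left hAne
    have h2 := ha (α + m * ϖ ^ c) (-(m * ϖ ^ c)) hAne (neg_ne_zero.mpr (mul_ne_zero hm0 hW))
      (by rw [show α + m * ϖ ^ c + -(m * ϖ ^ c) = α by ring]; exact hα)
    rw [show α + m * ϖ ^ c + -(m * ϖ ^ c) = α by ring,
      v_neg hm (mul_ne_zero hm0 hW)] at h2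
    omega
  · rintro ⟨hm0, hv⟩
    have hvmj : v (m * ϖ ^ c) = v m + c := by rw [hm _ _ hm0 hW, v_zpow hm hϖ0 hϖv]
    refine ⟨hm0, ?_⟩
    rcases eq_or_ne (α + m * ϖ ^ c) 0 with h0 | hAne
    · exact Or.inl h0
    right
    have h2 := ha α (m * ϖ ^ c) hα (mul_ne_zero hm0 hW) hAne
    omega

lemma case_mid_jlt (hm : Hmul v) (ha : Hadd v) {ϖ : F} (hϖ0 : ϖ ≠ 0) (hϖv : v ϖ = 1)
    {i j : ℤ} (hj : j < i) {α m : F} (hα : α ≠ 0) :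
    (α + m * ϖ ^ j ≠ 0 ∧ m ≠ 0 ∧ v (α + m * ϖ ^ j) = v m + i) ↔
      ∃ t : F, t ≠ 0 ∧ v t = i - j ∧ m = α * ϖ ^ (-j) * (-1 + t) := by
  have hW : ϖ ^ j ≠ 0 := zpow_ne_zero j hϖ0
  have key : (∃ t : F, t ≠ 0 ∧ v t = i - j ∧ m = α * ϖ ^ (-j) * (-1 + t)) ↔
      ((α + m * ϖ ^ j) / α ≠ 0 ∧ v ((α + m * ϖ ^ j) / α) = i - j) := by
    have := exists_t_iff (m := m) (W := ϖ ^ j) hα hW (fun t => t ≠ 0 ∧ v t = i - j)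
    rw [← this]
    simp_rw [zpow_neg, and_assoc]
  rw [key]
  constructor
  · rintro ⟨hAne, hm0, hv⟩
    have hvmj : v (m * ϖ ^ j) = v m + j := by rw [hm _ _ hm0 hW, v_zpow hm hϖ0 hϖv]
    have h2 := v_add_lt hm ha (x := -(m * ϖ ^ j)) (y := α + m * ϖ ^ j)
      (neg_ne_zero.mpr (mul_ne_zero hm0 hW)) hAne
      (by rw [v_neg hm (mul_ne_zero hm0 hW)]; omega)
    rw [show -(m * ϖ ^ j) + (α + m * ϖ ^ j) = α by ring,
      v_neg hm (mul_ne_zero hm0 hW)] at h2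
    refine ⟨div_ne_zero hAne hα, ?_⟩
    rw [div_eq_mul_inv, hm _ _ hAne (inv_ne_zero hα), v_inv hm hα]
    omega
  · rintro ⟨hdne, hdv⟩
    have hAne : α + m * ϖ ^ j ≠ 0 := fun h0 => hdne (by rw [h0, zero_div])
    have hdiv : v ((α + m * ϖ ^ j) / α) = v (α + m * ϖ ^ j) - v α := by
      rw [div_eq_mul_inv, hm _ _ hAne (inv_ne_zero hα), v_inv hm hα]; omega
    have hm0 : m ≠ 0 := by
      rintro rfl
      rw [zero_mul, add_zero] at hdv hdiv
      omega
    have h2 := v_add_lt hm ha (x := -α) (y := α + m * ϖ ^ j) (neg_ne_zero.mpr hα) hAne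
      (by rw [v_neg hm hα]; omega)
    rw [show -α + (α + m * ϖ ^ j) = m * ϖ ^ j by ring, v_neg hm hα] at h2
    have hvmj : v (m * ϖ ^ j) = v m + j := by rw [hm _ _ hm0 hW, v_zpow hm hϖ0 hϖv]
    exact ⟨hAne, hm0, by omega⟩

lemma case_mid_jeq (hm : Hmul v) (ha : Hadd v) {ϖ : F} (hϖ0 : ϖ ≠ 0) (hϖv : v ϖ = 1)
    {i : ℤ} {α m : F} (hα : α ≠ 0) :
    (α + m * ϖ ^ i ≠ 0 ∧ m ≠ 0 ∧ v (α + m * ϖ ^ i) = v m + i) ↔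
      (m ≠ 0 ∧ v m ≤ v α - i ∧
        ¬ ∃ t : F, (t = 0 ∨ 1 ≤ v t) ∧ m = α * ϖ ^ (-i) * (-1 + t)) := by
  have hW : ϖ ^ i ≠ 0 := zpow_ne_zero i hϖ0
  have key : (∃ t : F, (t = 0 ∨ 1 ≤ v t) ∧ m = α * ϖ ^ (-i) * (-1 + t)) ↔
      ((α + m * ϖ ^ i) / α = 0 ∨ 1 ≤ v ((α + m * ϖ ^ i) / α)) := by
    rw [← exists_t_iff (m := m) (W := ϖ ^ i) hα hW (fun t => t = 0 ∨ 1 ≤ v t)]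
    simp_rw [zpow_neg]
  rw [key, div_eq_zero_iff, or_iff_left hα]
  constructor
  · rintro ⟨hAne, hm0, hv⟩
    have hvmj : v (m * ϖ ^ i) = v m + i := by rw [hm _ _ hm0 hW, v_zpow hm hϖ0 hϖv]
    have h2 := ha (α + m * ϖ ^ i) (-(m * ϖ ^ i)) hAne (neg_ne_zero.mpr (mul_ne_zero hm0 hW))
      (by rw [show α + m * ϖ ^ i + -(m * ϖ ^ i) = α by ring]; exact hα)
    rw [show α + m * ϖ ^ i + -(m * ϖ ^ i) = α by ring,
      v_neg hm (mul_ne_zero hm0 hW)] at h2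
    have hdiv : v ((α + m * ϖ ^ i) / α) = v (α + m * ϖ ^ i) - v α := by
      rw [div_eq_mul_inv, hm _ _ hAne (inv_ne_zero hα), v_inv hm hα]; omega
    refine ⟨hm0, by omega, ?_⟩
    rintro (h0 | h1)
    · exact hAne h0
    · omega
  · rintro ⟨hm0, hvm, hno⟩
    have hAne : α + m * ϖ ^ i ≠ 0 := fun h0 => hno (Or.inl h0)
    have hvmj : v (m * ϖ ^ i) = v m + i := by rw [hm _ _ hm0 hW, v_zpow hm hϖ0 hϖv]
    have hdiv : v ((α + m * ϖ ^ i) / α) = v (α + m * ϖ ^ i) - v α := by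
      rw [div_eq_mul_inv, hm _ _ hAne (inv_ne_zero hα), v_inv hm hα]; omega
    have hupper : v (α + m * ϖ ^ i) ≤ v α := by
      by_contra hgt
      exact hno (Or.inr (by omega))
    have hge := ha α (m * ϖ ^ i) hα (mul_ne_zero hm0 hW) hAne
    have hle := ha (α + m * ϖ ^ i) (-α) hAne (neg_ne_zero.mpr hα)
      (by rw [show α + m * ϖ ^ i + -α = m * ϖ ^ i by ring]; exact mul_ne_zero hm0 hW)
    rw [show α + m * ϖ ^ i + -α = m * ϖ ^ i by ring, v_neg hm hα] at hle
    exact ⟨hAne, hm0, by omega⟩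

lemma case_mid_jgt (hm : Hmul v) (ha : Hadd v) {ϖ : F} (hϖ0 : ϖ ≠ 0) (hϖv : v ϖ = 1)
    {i j : ℤ} (hj : i < j) {α m : F} (hα : α ≠ 0) :
    (α + m * ϖ ^ j ≠ 0 ∧ m ≠ 0 ∧ v (α + m * ϖ ^ j) = v m + i) ↔
      ∃ u : F, u ≠ 0 ∧ v u = 0 ∧ m = α * ϖ ^ (-i) * u := by
  have hW : ϖ ^ j ≠ 0 := zpow_ne_zero j hϖ0
  have hWi : ϖ ^ i ≠ 0 := zpow_ne_zero i hϖ0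
  have hWni : ϖ ^ (-i : ℤ) ≠ 0 := zpow_ne_zero _ hϖ0
  have key : (∃ u : F, u ≠ 0 ∧ v u = 0 ∧ m = α * ϖ ^ (-i) * u) ↔ (m ≠ 0 ∧ v m = v α - i) := by
    constructor
    · rintro ⟨u, hu0, hvu, rfl⟩
      have hne : α * ϖ ^ (-i : ℤ) ≠ 0 := mul_ne_zero hα hWni
      refine ⟨mul_ne_zero hne hu0, ?_⟩
      rw [hm _ _ hne hu0, hm _ _ hα hWni, v_zpow hm hϖ0 hϖv]
      omega
    · rintro ⟨hm0, hv⟩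
      refine ⟨m * ϖ ^ i / α, div_ne_zero (mul_ne_zero hm0 hWi) hα, ?_, ?_⟩
      · rw [div_eq_mul_inv, hm _ _ (mul_ne_zero hm0 hWi) (inv_ne_zero hα), v_inv hm hα,
          hm _ _ hm0 hWi, v_zpow hm hϖ0 hϖv]
        omega
      · rw [zpow_neg]
        field_simp
  rw [key]
  constructor
  · rintro ⟨hAne, hm0, hv⟩
    have hvmj : v (m * ϖ ^ j) = v m + j := by rw [hm _ _ hm0 hW, v_zpow hm hϖ0 hϖv]
    have h2 := v_add_lt hm ha (x := α + m * ϖ ^ j) (y := -(m * ϖ ^ j)) hAne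
      (neg_ne_zero.mpr (mul_ne_zero hm0 hW))
      (by rw [v_neg hm (mul_ne_zero hm0 hW)]; omega)
    rw [show α + m * ϖ ^ j + -(m * ϖ ^ j) = α by ring] at h2
    exact ⟨hm0, by omega⟩
  · rintro ⟨hm0, hv⟩
    have hvmj : v (m * ϖ ^ j) = v m + j := by rw [hm _ _ hm0 hW, v_zpow hm hϖ0 hϖv]
    have h2 := v_add_lt hm ha (x := α) (y := m * ϖ ^ j) hα (mul_ne_zero hm0 hW) (by omega)
    exact ⟨h2.1, hm0, by omega⟩

lemma neg_or_le (hm : Hmul v) {a b : F} (ha' : a ≠ 0) :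
    (-b = 0 ∨ v (-a) ≤ v (-b)) ↔ (b = 0 ∨ v a ≤ v b) := by
  rcases eq_or_ne b 0 with rfl | hb
  · simp
  · rw [v_neg hm ha', v_neg hm hb]
    simp [hb, neg_eq_zero]

lemma neg_or_le' (hm : Hmul v) {a b : F} (n : ℤ) (hb : b ≠ 0) :
    (-a = 0 ∨ v (-b) + n ≤ v (-a)) ↔ (a = 0 ∨ v b + n ≤ v a) := by
  rcases eq_or_ne a 0 with rfl | ha'
  · simp
  · rw [v_neg hm ha', v_neg hm hb]
    simp [ha', neg_eq_zero]
end Stmt8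


namespace Stmt8
variable {F : Type*} [Field F] {v : F → ℤ}

lemma clean_zero (hm : Hmul v) (A b : F) :
    (-A ≠ 0 ∧ (-b = 0 ∨ v (-A) ≤ v (-b))) ↔ (A ≠ 0 ∧ (b = 0 ∨ v A ≤ v b)) := by
  rw [neg_ne_zero]
  constructor
  · rintro ⟨h1, h2⟩; exact ⟨h1, (neg_or_le hm h1).mp h2⟩
  · rintro ⟨h1, h2⟩; exact ⟨h1, (neg_or_le hm h1).mpr h2⟩

lemma clean_top (hm : Hmul v) (n : ℤ) (A b : F) :
    (-b ≠ 0 ∧ (-A = 0 ∨ v (-b) + n ≤ v (-A))) ↔ (b ≠ 0 ∧ (A = 0 ∨ v b + n ≤ v A)) := by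
  rw [neg_ne_zero]
  constructor
  · rintro ⟨h1, h2⟩; exact ⟨h1, (neg_or_le' hm n h1).mp h2⟩
  · rintro ⟨h1, h2⟩; exact ⟨h1, (neg_or_le' hm n h1).mpr h2⟩

lemma clean_mid (hm : Hmul v) (n : ℤ) (A b : F) :
    (-A ≠ 0 ∧ -b ≠ 0 ∧ v (-A) = v (-b) + n) ↔ (A ≠ 0 ∧ b ≠ 0 ∧ v A = v b + n) := by
  rw [neg_ne_zero, neg_ne_zero]
  constructor
  · rintro ⟨h1, h2, h3⟩
    rw [v_neg hm h1, v_neg hm h2] at h3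
    exact ⟨h1, h2, h3⟩
  · rintro ⟨h1, h2, h3⟩
    exact ⟨h1, h2, by rw [v_neg hm h1, v_neg hm h2]; exact h3⟩

end Stmt8


open Stmt8

/-- The Iwasawa-type position of
`M = [[ϖʲ, 1],[−α−mϖʲ, −m]] = ω·[[1,m],[0,1]]·[[α,0],[0,1]]·[[1,0],[ϖʲ,1]]` relative to
the decomposition `GL₂(F) = ⨿_{0≤i≤c} B(F)·[[1,0],[ϖⁱ,1]]·K₁(ϖᶜ)`:
`M ∈ B(F)·[[1,0],[ϖⁱ,1]]·K₁(ϖᶜ)` iff the stated case-by-case condition on `m` holds. -/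
theorem stmt_8
    (F : Type*) [Field F]
    (v : F → ℤ) (ϖ : F)
    (hϖ0 : ϖ ≠ 0) (hϖv : v ϖ = 1)
    (hvmul : ∀ x y : F, x ≠ 0 → y ≠ 0 → v (x * y) = v x + v y)
    (hvadd : ∀ x y : F, x ≠ 0 → y ≠ 0 → x + y ≠ 0 → min (v x) (v y) ≤ v (x + y))
    (c i j : ℤ) (hc : 1 ≤ c)
    (hi0 : 0 ≤ i) (hic : i ≤ c) (hj0 : 0 ≤ j) (hjc : j ≤ c)
    (α m : F) (hα : α ≠ 0) :
    ∀ mem : Prop,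
      (mem ↔ ∃ b k : Matrix (Fin 2) (Fin 2) F,
        b 1 0 = 0 ∧ b.det ≠ 0 ∧
        (∀ i' j', k i' j' = 0 ∨ 0 ≤ v (k i' j')) ∧ k.det ≠ 0 ∧ v k.det = 0 ∧
        (k 1 0 = 0 ∨ c ≤ v (k 1 0)) ∧ (k 1 1 - 1 = 0 ∨ c ≤ v (k 1 1 - 1)) ∧
        !![ϖ ^ j, 1; -α - m * ϖ ^ j, -m] = b * !![1, 0; ϖ ^ i, 1] * k) →
      ((i = 0 → j = 0 →
          (mem ↔ ¬ ∃ t : F, (t = 0 ∨ 1 ≤ v t) ∧ m = α * (-1 + t))) ∧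
       (i = 0 → 0 < j →
          (mem ↔ (m = 0 ∨ v α ≤ v m))) ∧
       (i = c → j < c →
          (mem ↔ ∃ t : F, (t = 0 ∨ c - j ≤ v t) ∧ m = α * ϖ ^ (-j) * (-1 + t))) ∧
       (i = c → j = c →
          (mem ↔ (m ≠ 0 ∧ v m ≤ v α - c))) ∧
       (0 < i → i < c → j < i →
          (mem ↔ ∃ t : F, t ≠ 0 ∧ v t = i - j ∧ m = α * ϖ ^ (-j) * (-1 + t))) ∧
       (0 < i → i < c → j = i →
          (mem ↔ (m ≠ 0 ∧ v m ≤ v α - i ∧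
            ¬ ∃ t : F, (t = 0 ∨ 1 ≤ v t) ∧ m = α * ϖ ^ (-i) * (-1 + t)))) ∧
       (0 < i → i < c → i < j →
          (mem ↔ ∃ u : F, u ≠ 0 ∧ v u = 0 ∧ m = α * ϖ ^ (-i) * u))) := by
  intro mem hmem
  have hm : Hmul v := hvmul
  have ha : Hadd v := hvadd
  have hmem' : mem ↔ PairCond v ϖ c i (-α - m * ϖ ^ j) (-m) :=
    hmem.trans (mem_iff v ϖ c i j α m hα)
  refine ⟨?_, ?_, ?_, ?_, ?_, ?_, ?_⟩
  · intro hi hj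
    subst hi; subst hj
    rw [hmem', pairCond_zero hm ha hϖ0 hϖv hc,
      show -α - m * ϖ ^ (0 : ℤ) = -(α + m) by rw [zpow_zero]; ring, clean_zero hm]
    exact case_i0_j0 hm ha hα
  · intro hi hj
    subst hi
    rw [hmem', pairCond_zero hm ha hϖ0 hϖv hc,
      show -α - m * ϖ ^ j = -(α + m * ϖ ^ j) by ring, clean_zero hm]
    exact case_i0_jpos hm ha hϖ0 hϖv hj hα
  · intro hi hj
    subst hi
    rw [hmem', pairCond_top hm ha hϖ0 hϖv hc,
      show -α - m * ϖ ^ j = -(α + m * ϖ ^ j) by ring, clean_top hm]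
    exact case_ic_jlt hm ha hϖ0 hϖv hj hα
  · intro hi hj
    subst hi; subst hj
    rw [hmem', pairCond_top hm ha hϖ0 hϖv hc,
      show -α - m * ϖ ^ j = -(α + m * ϖ ^ j) by ring, clean_top hm]
    exact case_ic_jc hm ha hϖ0 hϖv hα
  · intro hi hic' hj
    rw [hmem', pairCond_mid hm ha hϖ0 hϖv hi hic',
      show -α - m * ϖ ^ j = -(α + m * ϖ ^ j) by ring, clean_mid hm]
    exact case_mid_jlt hm ha hϖ0 hϖv hj hα
  · intro hi hic' hj
    subst hj
    rw [hmem', pairCond_mid hm ha hϖ0 hϖv hi hic',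
      show -α - m * ϖ ^ j = -(α + m * ϖ ^ j) by ring, clean_mid hm]
    exact case_mid_jeq hm ha hϖ0 hϖv hα
  · intro hi hic' hj
    rw [hmem', pairCond_mid hm ha hϖ0 hϖv hi hic',
      show -α - m * ϖ ^ j = -(α + m * ϖ ^ j) by ring, clean_mid hm]
    exact case_mid_jgt hm ha hϖ0 hϖv hj hα
end

section
/- Let E = F(√D) be the unramified quadratic extension of F and let χ be a quasi-character of Eˣ of level c ≥ 1 (trivial on 1+ϖᶜO_E, nontrivial on 1+ϖ^{c−1}O_E, with 1+ϖ⁰O_E meaning O_Eˣ) whose restriction to Fˣ is unramified (trivial on Oˣ). Since χ is trivial on 1+ϖᶜO_E, the functions b ↦ χ(1+b√D) and b ↦ χ(√D+b) on O_F descend to the finite quotient O_F/ϖᶜO_F. If c ≥ 2, then for 0 ≤ i ≤ c: Σ_{b ∈ O_F/ϖᶜO_F, v(b)=i} χ(1+b√D) equals 1 if i = c (the single term b = 0), equals −1 if i = c−1, and equals 0 if 0 ≤ i ≤ c−2; likewise Σ_{b ∈ O_F/ϖᶜO_F, v(b)=i} χ(√D+b) equals χ(√D) if i = c, −χ(√D)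 if i = c−1, and 0 if 0 ≤ i ≤ c−2. If c = 1, then Σ_{b ∈ O_F/ϖO_F} χ(1+b√D) + χ(√D) = 0. -/
open scoped Classical

namespace Stmt11

structure Setup (E : Type*) [Field E] where
  F : Subfield E
  v : E → ℤ
  hvmul : ∀ x y : E, x ≠ 0 → y ≠ 0 → v (x * y) = v x + v y
  hvadd : ∀ x y : E, x ≠ 0 → y ≠ 0 → x + y ≠ 0 → min (v x) (v y) ≤ v (x + y)
  D : E
  sqrtD : E
  hDF : D ∈ F
  hD0 : D ≠ 0
  hDv : v D = 0
  hDns : ¬ ∃ y ∈ F, y * y = D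
  hsq : sqrtD * sqrtD = D
  hinert : ∀ a b : E, a ∈ F → b ∈ F → a ≠ 0 → b ≠ 0 → v (a + b * sqrtD) = min (v a) (v b)
  χ : E → ℂ
  hχm : ∀ x y : E, x ≠ 0 → y ≠ 0 → χ (x * y) = χ x * χ y
  hχ0 : ∀ x : E, x ≠ 0 → χ x ≠ 0
  c : ℤ
  hc : 1 ≤ c
  hχtriv : ∀ x : E, (x = 0 ∨ c ≤ v x) → χ (1 + x) = 1
  hχF : ∀ x : E, x ∈ F → x ≠ 0 → v x = 0 → χ x = 1
  R : Finset E
  hR1 : ∀ ρ ∈ R, ρ ∈ F ∧ (ρ = 0 ∨ 0 ≤ v ρ)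
  hR2 : ∀ y : E, y ∈ F → (y = 0 ∨ 0 ≤ v y) → ∃! ρ, ρ ∈ R ∧ (y - ρ = 0 ∨ c ≤ v (y - ρ))

namespace Setup

variable {E : Type*} [Field E] (S : Setup E)

/-- `x = 0` or `v x ≥ n`. -/
def Vge (n : ℤ) (x : E) : Prop := x = 0 ∨ n ≤ S.v x

theorem v_one : S.v 1 = 0 := by
  have := S.hvmul 1 1 one_ne_zero one_ne_zero
  rw [mul_one] at this; linarith

theorem v_neg {x : E} (hx : x ≠ 0) : S.v (-x) = S.v x := by
  have h1 : S.v (-1 : E) = 0 := by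
    have := S.hvmul (-1) (-1) (by norm_num) (by norm_num)
    rw [neg_mul_neg, one_mul, S.v_one] at this; linarith
  have := S.hvmul (-1) x (by norm_num) hx
  rw [neg_one_mul, h1] at this; linarith

theorem v_inv {x : E} (hx : x ≠ 0) : S.v x⁻¹ = - S.v x := by
  have := S.hvmul x x⁻¹ hx (inv_ne_zero hx)
  rw [mul_inv_cancel₀ hx, S.v_one] at this; linarith

theorem v_div {x y : E} (hx : x ≠ 0) (hy : y ≠ 0) : S.v (x / y) = S.v x - S.v y := by
  rw [div_eq_mul_inv, S.hvmul x y⁻¹ hx (inv_ne_zero hy), S.v_inv hy]; ring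

theorem Vge_mono {m n : ℤ} (h : m ≤ n) {x : E} (hx : S.Vge n x) : S.Vge m x :=
  hx.imp id fun h' => le_trans h h'

theorem Vge_add {n : ℤ} {x y : E} (hx : S.Vge n x) (hy : S.Vge n y) : S.Vge n (x + y) := by
  by_cases h0x : x = 0
  · simpa [h0x] using hy
  by_cases h0y : y = 0
  · simpa [h0y] using hx
  by_cases hxy : x + y = 0
  · exact Or.inl hxy
  exact Or.inr (le_trans (le_min (hx.resolve_left h0x) (hy.resolve_left h0y))
    (S.hvadd x y h0x h0y hxy))

theorem Vge_neg {n : ℤ} {x : E} (hx : S.Vge n x) : S.Vge n (-x) := by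
  by_cases h0 : x = 0
  · simp [h0, Vge]
  · exact Or.inr (by rw [S.v_neg h0]; exact hx.resolve_left h0)

theorem Vge_sub {n : ℤ} {x y : E} (hx : S.Vge n x) (hy : S.Vge n y) : S.Vge n (x - y) := by
  have := S.Vge_add hx (S.Vge_neg hy); rwa [← sub_eq_add_neg] at this

theorem Vge_mul {m n : ℤ} {x y : E} (hx : S.Vge m x) (hy : S.Vge n y) :
    S.Vge (m + n) (x * y) := by
  by_cases h0x : x = 0
  · simp [h0x, Vge]
  by_cases h0y : y = 0
  · simp [h0y, Vge]
  exact Or.inr (by rw [S.hvmul x y h0x h0y]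
                   exact add_le_add (hx.resolve_left h0x) (hy.resolve_left h0y))

theorem Vge_mul_unit {n : ℤ} {x u : E} (hx : S.Vge n x) (hu : u ≠ 0) (huv : S.v u = 0) :
    S.Vge n (x * u) := by
  have := S.Vge_mul hx (Or.inr (le_of_eq huv.symm) : S.Vge 0 u)
  rwa [add_zero] at this

theorem Vge_div_unit {n : ℤ} {x u : E} (hx : S.Vge n x) (hu : u ≠ 0) (huv : S.v u = 0) :
    S.Vge n (x / u) := by
  rw [div_eq_mul_inv]
  exact S.Vge_mul_unit hx (inv_ne_zero hu) (by rw [S.v_inv hu, huv]; ring)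

theorem one_add_unit {x : E} (hx : S.Vge 1 x) : 1 + x ≠ 0 ∧ S.v (1 + x) = 0 := by
  by_cases h0 : x = 0
  · simp [h0, S.v_one]
  have hvx : 1 ≤ S.v x := hx.resolve_left h0
  have hne : 1 + x ≠ 0 := by
    intro h
    have hx1 : x = -1 := by linear_combination h
    rw [hx1, S.v_neg one_ne_zero, S.v_one] at hvx; omega
  have hge : (0 : ℤ) ≤ S.v (1 + x) := by
    have := S.hvadd 1 x one_ne_zero h0 hne
    rw [S.v_one] at this; omega
  have hle : S.v (1 + x) ≤ 0 := by
    have h2 := S.hvadd (1 + x) (-x) hne (neg_ne_zero.mpr h0) (by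
      intro h; apply one_ne_zero (α := E); linear_combination h)
    have h3 : (1 : E) + x + -x = 1 := by ring
    rw [h3, S.v_one, S.v_neg h0] at h2
    rcases min_le_iff.mp h2 with h | h
    · exact h
    · omega
  exact ⟨hne, le_antisymm hle hge⟩

theorem v_add_eq {n : ℤ} {x y : E} (hx0 : x ≠ 0) (hvx : S.v x < n) (hy : S.Vge n y) :
    x + y ≠ 0 ∧ S.v (x + y) = S.v x := by
  by_cases h0y : y = 0
  · simp [h0y, hx0]
  have hvy : n ≤ S.v y := hy.resolve_left h0y
  have hne : x + y ≠ 0 := by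
    intro h
    have hxy : x = -y := by linear_combination h
    rw [hxy, S.v_neg h0y] at hvx; omega
  have h1 : S.v x ≤ S.v (x + y) := by
    have := S.hvadd x y hx0 h0y hne; omega
  have h2 : S.v (x + y) ≤ S.v x := by
    have h2 := S.hvadd (x + y) (-y) hne (neg_ne_zero.mpr h0y) (by
      intro h; exact hx0 (by linear_combination h))
    have h3 : x + y + -y = x := by ring
    rw [h3, S.v_neg h0y] at h2
    rcases min_le_iff.mp h2 with h | h
    · exact h
    · omega
  exact ⟨hne, le_antisymm h2 h1⟩

theorem χ_one : S.χ 1 = 1 := by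
  have := S.hχm 1 1 one_ne_zero one_ne_zero
  rw [mul_one] at this
  have h0 := S.hχ0 1 one_ne_zero
  field_simp at this
  tauto

theorem χ_congr {z w : E} (hw : w ≠ 0) (hwv : S.v w = 0) (h : S.Vge S.c (z - w)) :
    S.χ z = S.χ w := by
  have hδ : S.Vge S.c ((z - w) / w) := S.Vge_div_unit h hw hwv
  have h1 : S.χ (1 + (z - w) / w) = 1 := S.hχtriv _ hδ
  have hne : 1 + (z - w) / w ≠ 0 := (S.one_add_unit (S.Vge_mono S.hc hδ)).1
  have hz : z = w * (1 + (z - w) / w) := by field_simp; ring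
  rw [hz, S.hχm w _ hw hne, h1, mul_one]

theorem sqrtD_ne : S.sqrtD ≠ 0 := fun h => S.hD0 (by rw [← S.hsq, h, mul_zero])

theorem v_sqrtD : S.v S.sqrtD = 0 := by
  have := S.hvmul _ _ S.sqrtD_ne S.sqrtD_ne
  rw [S.hsq, S.hDv] at this; linarith

theorem Vge_sqrtD_mul {n : ℤ} {b : E} (hb : S.Vge n b) : S.Vge n (b * S.sqrtD) :=
  S.Vge_mul_unit hb S.sqrtD_ne S.v_sqrtD

theorem pair_ne {a b : E} (ha : a ∈ S.F) (hb : b ∈ S.F) (h : ¬(a = 0 ∧ b = 0)) :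
    a + b * S.sqrtD ≠ 0 := by
  intro he
  by_cases hb0 : b = 0
  · exact h ⟨by simpa [hb0] using he, hb0⟩
  · apply S.hDns
    refine ⟨-(a / b), S.F.neg_mem (S.F.div_mem ha hb), ?_⟩
    have hs : S.sqrtD = -(a / b) := by
      field_simp
      linear_combination he
    rw [← hs, S.hsq]

theorem pair_unit {a b : E} (ha : a ∈ S.F) (hb : b ∈ S.F) (h0a : S.Vge 0 a) (h0b : S.Vge 0 b)
    (h : (a ≠ 0 ∧ S.v a = 0) ∨ (b ≠ 0 ∧ S.v b = 0)) :
    a + b * S.sqrtD ≠ 0 ∧ S.v (a + b * S.sqrtD) = 0 := by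
  have hne : a + b * S.sqrtD ≠ 0 := S.pair_ne ha hb (by rintro ⟨rfl, rfl⟩; simp at h)
  refine ⟨hne, ?_⟩
  by_cases hb0 : b = 0
  · rcases h with ⟨ha0, hva⟩ | ⟨hb', _⟩
    · simpa [hb0] using hva
    · exact absurd hb0 hb'
  by_cases ha0 : a = 0
  · rcases h with ⟨ha', _⟩ | ⟨hb', hvb⟩
    · exact absurd ha0 ha'
    · rw [ha0, zero_add, S.hvmul b _ hb0 S.sqrtD_ne, S.v_sqrtD, hvb]; ring
  have := S.hinert a b ha hb ha0 hb0
  rw [this]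
  have hva := h0a.resolve_left ha0
  have hvb := h0b.resolve_left hb0
  rcases h with ⟨_, hva'⟩ | ⟨_, hvb'⟩ <;> omega

theorem pair_Vge {a b : E} {n : ℤ} (ha : a ∈ S.F) (hb : b ∈ S.F)
    (h : S.Vge n (a + b * S.sqrtD)) : S.Vge n a ∧ S.Vge n b := by
  by_cases hb0 : b = 0
  · refine ⟨?_, Or.inl hb0⟩; simpa [hb0] using h
  by_cases ha0 : a = 0
  · refine ⟨Or.inl ha0, ?_⟩
    rw [ha0, zero_add] at h
    rcases h with h | h
    · exact absurd h (mul_ne_zero hb0 S.sqrtD_ne)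
    · exact Or.inr (by rw [S.hvmul b _ hb0 S.sqrtD_ne, S.v_sqrtD] at h; omega)
  have hne : a + b * S.sqrtD ≠ 0 := S.pair_ne ha hb (by tauto)
  have h' := h.resolve_left hne
  rw [S.hinert a b ha hb ha0 hb0] at h'
  exact ⟨Or.inr (by omega), Or.inr (by omega)⟩

/-- The function `b ↦ χ(1 + b√D)`. -/
noncomputable def f (b : E) : ℂ := S.χ (1 + b * S.sqrtD)

theorem f_unit {b : E} (hb : b ∈ S.F) (h0 : S.Vge 0 b) :
    1 + b * S.sqrtD ≠ 0 ∧ S.v (1 + b * S.sqrtD) = 0 :=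
  S.pair_unit S.F.one_mem hb (Or.inr (le_of_eq S.v_one.symm)) h0
    (Or.inl ⟨one_ne_zero, S.v_one⟩)

theorem f_congr {b b' : E} (hb : b ∈ S.F) (hb' : b' ∈ S.F) (h0 : S.Vge 0 b)
    (h0' : S.Vge 0 b') (h : S.Vge S.c (b - b')) : S.f b = S.f b' := by
  have hw := S.f_unit hb' h0'
  have he : (1 + b * S.sqrtD) - (1 + b' * S.sqrtD) = (b - b') * S.sqrtD := by ring
  exact S.χ_congr hw.1 hw.2 (by rw [he]; exact S.Vge_sqrtD_mul h)

theorem f_one {b : E} (h : S.Vge S.c b) : S.f b = 1 := S.hχtriv _ (S.Vge_sqrtD_mul h)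

/-- The canonical representative in `R` of a class. -/
noncomputable def rep (z : E) : E :=
  if h : z ∈ S.F ∧ (z = 0 ∨ 0 ≤ S.v z) then (S.hR2 z h.1 h.2).exists.choose else 0

theorem rep_spec {z : E} (hz : z ∈ S.F) (h0 : S.Vge 0 z) :
    S.rep z ∈ S.R ∧ S.Vge S.c (z - S.rep z) := by
  rw [rep, dif_pos ⟨hz, h0⟩]
  exact (S.hR2 z hz h0).exists.choose_spec

theorem rep_eq {z ρ : E} (hz : z ∈ S.F) (h0 : S.Vge 0 z) (hρ : ρ ∈ S.R)
    (h : S.Vge S.c (z - ρ)) : S.rep z = ρ :=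
  (S.hR2 z hz h0).unique ⟨(S.rep_spec hz h0).1, (S.rep_spec hz h0).2⟩ ⟨hρ, h⟩

theorem rep_self {ρ : E} (hρ : ρ ∈ S.R) : S.rep ρ = ρ :=
  S.rep_eq (S.hR1 ρ hρ).1 (S.hR1 ρ hρ).2 hρ (Or.inl (sub_self ρ))

theorem R_eq_of_cl {ρ₁ ρ₂ : E} (h1 : ρ₁ ∈ S.R) (h2 : ρ₂ ∈ S.R)
    (h : S.Vge S.c (ρ₁ - ρ₂)) : ρ₁ = ρ₂ :=
  (S.hR2 ρ₁ (S.hR1 ρ₁ h1).1 (S.hR1 ρ₁ h1).2).unique ⟨h1, Or.inl (sub_self ρ₁)⟩ ⟨h2, h⟩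

theorem T_top : (∑ ρ ∈ S.R, if ρ = 0 ∨ S.c ≤ S.v ρ then S.f ρ else 0) = 1 := by
  have h0F : (0 : E) ∈ S.F := S.F.zero_mem
  have h00 : S.Vge 0 (0 : E) := Or.inl rfl
  have hspec := S.rep_spec h0F h00
  have hcl : S.Vge S.c (S.rep 0) := by
    have := S.Vge_neg hspec.2
    rwa [neg_sub, sub_zero] at this
  rw [Finset.sum_eq_single (S.rep 0)]
  · have hcl' : S.rep 0 = 0 ∨ S.c ≤ S.v (S.rep 0) := hcl
    rw [if_pos hcl']
    exact S.f_one hcl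
  · intro ρ hρ hne
    have hcon : ¬(ρ = 0 ∨ S.c ≤ S.v ρ) := by
      intro hcon
      exact hne (S.R_eq_of_cl hρ hspec.1 (S.Vge_sub (hcon : S.Vge S.c ρ) hcl))
    rw [if_neg hcon]
  · intro h; exact absurd hspec.1 h

theorem f_mul_formula {ρ t : E} (hρF : ρ ∈ S.F) (hρ0 : S.Vge 0 ρ) (htF : t ∈ S.F)
    (htV : S.Vge 0 t) (hd : S.Vge 1 (ρ * t * S.D)) :
    S.f ρ * S.f t = S.χ (1 + ρ * t * S.D) * S.f ((ρ + t) / (1 + ρ * t * S.D)) := by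
  have hdd := S.one_add_unit hd
  have hmF : (ρ + t) / (1 + ρ * t * S.D) ∈ S.F :=
    S.F.div_mem (S.F.add_mem hρF htF)
      (S.F.add_mem S.F.one_mem (S.F.mul_mem (S.F.mul_mem hρF htF) S.hDF))
  have hmV : S.Vge 0 ((ρ + t) / (1 + ρ * t * S.D)) :=
    S.Vge_div_unit (S.Vge_add hρ0 htV) hdd.1 hdd.2
  have hmun := S.f_unit hmF hmV
  have hm : (ρ + t) / (1 + ρ * t * S.D) * (1 + ρ * t * S.D) = ρ + t :=
    div_mul_cancel₀ _ hdd.1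
  have hident : (1 + ρ * S.sqrtD) * (1 + t * S.sqrtD)
      = (1 + ρ * t * S.D) * (1 + ((ρ + t) / (1 + ρ * t * S.D)) * S.sqrtD) := by
    linear_combination (ρ * t) * S.hsq - S.sqrtD * hm
  unfold f
  rw [← S.hχm _ _ (S.f_unit hρF hρ0).1 (S.f_unit htF htV).1, hident,
    S.hχm _ _ hdd.1 hmun.1]

theorem f_mul_unit {ρ t : E} (hρF : ρ ∈ S.F) (hρ0 : S.Vge 0 ρ) (htF : t ∈ S.F)
    (htV : S.Vge 0 t) (hd : S.Vge 1 (ρ * t * S.D)) :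
    S.f ρ * S.f t = S.f ((ρ + t) / (1 + ρ * t * S.D)) := by
  rw [S.f_mul_formula hρF hρ0 htF htV hd]
  have hdd := S.one_add_unit hd
  rw [S.hχF _ (S.F.add_mem S.F.one_mem (S.F.mul_mem (S.F.mul_mem hρF htF) S.hDF)) hdd.1 hdd.2,
    one_mul]

theorem exists_t (hc2 : 2 ≤ S.c)
    (hgen : ∀ x : E, ∃ a ∈ S.F, ∃ b ∈ S.F, x = a + b * S.sqrtD)
    (hnt : ∃ x : E, (x = 0 ∨ S.c - 1 ≤ S.v x) ∧ S.χ (1 + x) ≠ 1) :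
    ∃ t, t ∈ S.F ∧ t ≠ 0 ∧ S.v t = S.c - 1 ∧ S.f t ≠ 1 := by
  obtain ⟨x, hx, hxχ⟩ := hnt
  obtain ⟨a, haF, b, hbF, rfl⟩ := hgen x
  have hx0 : ¬(a = 0 ∧ b = 0) := by
    rintro ⟨rfl, rfl⟩
    simp only [zero_mul, add_zero] at hxχ
    exact hxχ S.χ_one
  obtain ⟨hVa, hVb⟩ := S.pair_Vge haF hbF (hx : S.Vge (S.c - 1) _)
  have hb0 : b ≠ 0 := by
    intro hb0
    have ha0 : a ≠ 0 := fun h => hx0 ⟨h, hb0⟩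
    have hva : 1 ≤ S.v a := le_trans (by omega) (hVa.resolve_left ha0)
    have h1a := S.one_add_unit (Or.inr hva : S.Vge 1 a)
    apply hxχ
    rw [hb0, zero_mul, add_zero]
    exact S.hχF (1 + a) (S.F.add_mem S.F.one_mem haF) h1a.1 h1a.2
  have hVa1 : S.Vge 1 a := by
    by_cases ha0 : a = 0
    · exact Or.inl ha0
    · exact Or.inr (le_trans (by omega) (hVa.resolve_left ha0))
  have h1a := S.one_add_unit hVa1
  have htF : b / (1 + a) ∈ S.F := S.F.div_mem hbF (S.F.add_mem S.F.one_mem haF)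
  have ht0 : b / (1 + a) ≠ 0 := div_ne_zero hb0 h1a.1
  have htV0 : S.Vge 0 (b / (1 + a)) :=
    S.Vge_div_unit (S.Vge_mono (by omega) hVb) h1a.1 h1a.2
  have hft : S.f (b / (1 + a)) ≠ 1 := by
    intro hft
    apply hxχ
    have hident : 1 + (a + b * S.sqrtD) = (1 + a) * (1 + (b / (1 + a)) * S.sqrtD) := by
      field_simp [h1a.1]
      ring
    rw [hident, S.hχm _ _ h1a.1 (S.f_unit htF htV0).1,
      S.hχF _ (S.F.add_mem S.F.one_mem haF) h1a.1 h1a.2, one_mul]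
    exact hft
  refine ⟨b / (1 + a), htF, ht0, ?_, hft⟩
  have hv1 : S.c - 1 ≤ S.v (b / (1 + a)) := by
    rw [S.v_div hb0 h1a.1, h1a.2]
    have := hVb.resolve_left hb0; omega
  have hv2 : ¬ S.c ≤ S.v (b / (1 + a)) := fun h => hft (S.f_one (Or.inr h))
  omega

theorem T_vanish (hc2 : 2 ≤ S.c) {t : E} (htF : t ∈ S.F) (ht0 : t ≠ 0)
    (htv : S.v t = S.c - 1) (htf : S.f t ≠ 1)
    {i : ℤ} (hi0 : 0 ≤ i) (hic : i ≤ S.c - 1) :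
    (∑ ρ ∈ S.R, if ρ = 0 ∨ i ≤ S.v ρ then S.f ρ else 0) = 0 := by
  classical
  have htV0 : S.Vge 0 t := Or.inr (by omega)
  have htVc1 : S.Vge (S.c - 1) t := Or.inr (by omega)
  -- the determinant 1 - t²D is a unit
  have hdet : (1 : E) + -(t * t * S.D) ≠ 0 ∧ S.v (1 + -(t * t * S.D)) = 0 := by
    apply S.one_add_unit
    apply S.Vge_neg
    apply S.Vge_mono (show (1:ℤ) ≤ (S.c - 1) + (S.c - 1) + 0 by omega)
    exact S.Vge_mul (S.Vge_mul htVc1 htVc1) (Or.inr (le_of_eq S.hDv.symm))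
  -- per-element facts
  have hfacts : ∀ ρ, ρ ∈ S.R → (ρ = 0 ∨ i ≤ S.v ρ) →
      (1 + ρ * t * S.D ≠ 0 ∧ S.v (1 + ρ * t * S.D) = 0) ∧
      ((ρ + t) / (1 + ρ * t * S.D) ∈ S.F ∧ S.Vge i ((ρ + t) / (1 + ρ * t * S.D))) ∧
      S.rep ((ρ + t) / (1 + ρ * t * S.D)) ∈ S.R.filter (fun ρ => ρ = 0 ∨ i ≤ S.v ρ) ∧
      S.f t * S.f ρ = S.f (S.rep ((ρ + t) / (1 + ρ * t * S.D))) := by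
    intro ρ hρR hρP
    obtain ⟨hρF, hρV⟩ := S.hR1 ρ hρR
    have hd : S.Vge 1 (ρ * t * S.D) := by
      apply S.Vge_mono (show (1:ℤ) ≤ 0 + (S.c - 1) + 0 by omega)
      exact S.Vge_mul (S.Vge_mul hρV htVc1) (Or.inr (le_of_eq S.hDv.symm))
    have hdd := S.one_add_unit hd
    have hmF : (ρ + t) / (1 + ρ * t * S.D) ∈ S.F :=
      S.F.div_mem (S.F.add_mem hρF htF)
        (S.F.add_mem S.F.one_mem (S.F.mul_mem (S.F.mul_mem hρF htF) S.hDF))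
    have hmVi : S.Vge i ((ρ + t) / (1 + ρ * t * S.D)) :=
      S.Vge_div_unit (S.Vge_add (hρP : S.Vge i ρ) (S.Vge_mono (by omega) htVc1)) hdd.1 hdd.2
    have hmV0 : S.Vge 0 ((ρ + t) / (1 + ρ * t * S.D)) := S.Vge_mono hi0 hmVi
    have hrep := S.rep_spec hmF hmV0
    have hrepP : S.rep ((ρ + t) / (1 + ρ * t * S.D)) = 0 ∨
        i ≤ S.v (S.rep ((ρ + t) / (1 + ρ * t * S.D))) := by
      have h1 : S.Vge i ((ρ + t) / (1 + ρ * t * S.D) -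
          ((ρ + t) / (1 + ρ * t * S.D) - S.rep ((ρ + t) / (1 + ρ * t * S.D)))) :=
        S.Vge_sub hmVi (S.Vge_mono (by omega) hrep.2)
      rw [sub_sub_cancel] at h1
      exact h1
    refine ⟨hdd, ⟨hmF, hmVi⟩, Finset.mem_filter.mpr ⟨hrep.1, hrepP⟩, ?_⟩
    rw [mul_comm, S.f_mul_unit hρF (S.Vge_mono hi0 (hρP : S.Vge i ρ)) htF htV0 hd]
    exact S.f_congr hmF (S.hR1 _ hrep.1).1 hmV0 (S.hR1 _ hrep.1).2 hrep.2
  set T := ∑ ρ ∈ S.R, if ρ = 0 ∨ i ≤ S.v ρ then S.f ρ else 0 with hT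
  have key : S.f t * T = T := by
    have e1 : S.f t * T = ∑ ρ ∈ S.R.filter (fun ρ => ρ = 0 ∨ i ≤ S.v ρ), S.f t * S.f ρ := by
      rw [hT, ← Finset.sum_filter, Finset.mul_sum]
    have e3 : T = ∑ ρ ∈ S.R.filter (fun ρ => ρ = 0 ∨ i ≤ S.v ρ), S.f ρ := by
      rw [hT, ← Finset.sum_filter]
    rw [e1, e3]
    have hmem : ∀ ρ (hρ : ρ ∈ S.R.filter (fun ρ => ρ = 0 ∨ i ≤ S.v ρ)),
        S.rep ((ρ + t) / (1 + ρ * t * S.D)) ∈ S.R.filter (fun ρ => ρ = 0 ∨ i ≤ S.v ρ) := by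
      intro ρ hρ
      obtain ⟨hρR, hρP⟩ := Finset.mem_filter.mp hρ
      exact (hfacts ρ hρR hρP).2.2.1
    have hinj : ∀ ρ₁ (h1 : ρ₁ ∈ S.R.filter (fun ρ => ρ = 0 ∨ i ≤ S.v ρ))
        ρ₂ (h2 : ρ₂ ∈ S.R.filter (fun ρ => ρ = 0 ∨ i ≤ S.v ρ)),
        S.rep ((ρ₁ + t) / (1 + ρ₁ * t * S.D)) = S.rep ((ρ₂ + t) / (1 + ρ₂ * t * S.D)) →
        ρ₁ = ρ₂ := by
      intro ρ₁ h1 ρ₂ h2 heq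
      obtain ⟨h1R, h1P⟩ := Finset.mem_filter.mp h1
      obtain ⟨h2R, h2P⟩ := Finset.mem_filter.mp h2
      obtain ⟨hdd1, ⟨hm1F, hm1V⟩, -, -⟩ := hfacts ρ₁ h1R h1P
      obtain ⟨hdd2, ⟨hm2F, hm2V⟩, -, -⟩ := hfacts ρ₂ h2R h2P
      have hr1 := S.rep_spec hm1F (S.Vge_mono hi0 hm1V)
      have hr2 := S.rep_spec hm2F (S.Vge_mono hi0 hm2V)
      rw [heq] at hr1
      have hΔ : S.Vge S.c ((ρ₁ + t) / (1 + ρ₁ * t * S.D) - (ρ₂ + t) / (1 + ρ₂ * t * S.D)) := by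
        have := S.Vge_sub hr1.2 hr2.2
        have he : ((ρ₁ + t) / (1 + ρ₁ * t * S.D) - S.rep ((ρ₂ + t) / (1 + ρ₂ * t * S.D)))
            - ((ρ₂ + t) / (1 + ρ₂ * t * S.D) - S.rep ((ρ₂ + t) / (1 + ρ₂ * t * S.D)))
            = (ρ₁ + t) / (1 + ρ₁ * t * S.D) - (ρ₂ + t) / (1 + ρ₂ * t * S.D) := by ring
        rwa [he] at this
      have hρΔ : S.Vge S.c (ρ₁ - ρ₂) := by
        have h5 : S.Vge S.c (((ρ₁ + t) / (1 + ρ₁ * t * S.D) - (ρ₂ + t) / (1 + ρ₂ * t * S.D))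
            * (1 + ρ₁ * t * S.D) * (1 + ρ₂ * t * S.D) / (1 + -(t * t * S.D))) :=
          S.Vge_div_unit (S.Vge_mul_unit (S.Vge_mul_unit hΔ hdd1.1 hdd1.2) hdd2.1 hdd2.2)
            hdet.1 hdet.2
        have he : ((ρ₁ + t) / (1 + ρ₁ * t * S.D) - (ρ₂ + t) / (1 + ρ₂ * t * S.D))
            * (1 + ρ₁ * t * S.D) * (1 + ρ₂ * t * S.D) / (1 + -(t * t * S.D)) = ρ₁ - ρ₂ := by
          rw [div_sub_div _ _ hdd1.1 hdd2.1, div_mul_eq_mul_div, div_mul_eq_mul_div, div_div,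
            div_eq_iff (mul_ne_zero (mul_ne_zero hdd1.1 hdd2.1) hdet.1)]
          ring
        rwa [he] at h5
      exact S.R_eq_of_cl h1R h2R hρΔ
    apply Finset.sum_bij (i := fun ρ _ => S.rep ((ρ + t) / (1 + ρ * t * S.D))) hmem hinj
    · intro b hb
      obtain ⟨a, ha, he⟩ := Finset.surj_on_of_inj_on_of_card_le
        (fun ρ _ => S.rep ((ρ + t) / (1 + ρ * t * S.D))) hmem
        (fun a₁ a₂ h₁ h₂ => hinj a₁ h₁ a₂ h₂) le_rfl b hb
      exact ⟨a, ha, he.symm⟩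
    · intro ρ hρ
      obtain ⟨hρR, hρP⟩ := Finset.mem_filter.mp hρ
      exact (hfacts ρ hρR hρP).2.2.2
  have h0 : (S.f t - 1) * T = 0 := by rw [sub_mul, key]; ring
  rcases mul_eq_zero.mp h0 with h | h
  · exact absurd (by linear_combination h) htf
  · exact h

/-- The summation condition: class of valuation exactly `i` (with `i = c` meaning zero class). -/
def Qc (i : ℤ) (ρ : E) : Prop :=
  (i = S.c ∧ (ρ = 0 ∨ S.c ≤ S.v ρ)) ∨ (i < S.c ∧ ρ ≠ 0 ∧ S.v ρ = i)

theorem Qc_congr {i : ℤ} {z w : E} (h : S.Vge S.c (w - z)) (hz : S.Qc i z) : S.Qc i w := by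
  have hzw : z + (w - z) = w := by ring
  rcases hz with ⟨hic, hzc⟩ | ⟨hic, hz0, hzv⟩
  · left
    refine ⟨hic, ?_⟩
    have h2 : S.Vge S.c (z + (w - z)) := S.Vge_add (hzc : S.Vge S.c z) h
    rwa [hzw] at h2
  · right
    refine ⟨hic, ?_⟩
    have h2 := S.v_add_eq hz0 (by omega : S.v z < S.c) h
    rw [hzw] at h2
    exact ⟨h2.1, by rw [h2.2, hzv]⟩

theorem Qc_div_D {i : ℤ} {ρ : E} (h : S.Qc i ρ) : S.Qc i (ρ / S.D) := by
  rcases h with ⟨hic, hρc⟩ | ⟨hic, hρ0, hρv⟩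
  · exact Or.inl ⟨hic, S.Vge_div_unit (hρc : S.Vge S.c ρ) S.hD0 S.hDv⟩
  · exact Or.inr ⟨hic, div_ne_zero hρ0 S.hD0, by rw [S.v_div hρ0 S.hD0, S.hDv, hρv]; ring⟩

theorem second_eq (i : ℤ) :
    (∑ ρ ∈ S.R, if S.Qc i ρ then S.χ (S.sqrtD + ρ) else 0)
    = S.χ S.sqrtD * ∑ ρ ∈ S.R, if S.Qc i ρ then S.f ρ else 0 := by
  classical
  have hdata : ∀ ρ ∈ S.R, ρ / S.D ∈ S.F ∧ S.Vge 0 (ρ / S.D) := by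
    intro ρ hρR
    exact ⟨S.F.div_mem (S.hR1 ρ hρR).1 S.hDF,
      S.Vge_div_unit (S.hR1 ρ hρR).2 S.hD0 S.hDv⟩
  have step1 : ∀ ρ ∈ S.R.filter (fun ρ => S.Qc i ρ),
      S.χ (S.sqrtD + ρ) = S.χ S.sqrtD * S.f (ρ / S.D) := by
    intro ρ hρ
    have hρR := (Finset.mem_filter.mp hρ).1
    obtain ⟨hmF, hmV⟩ := hdata ρ hρR
    have hident : S.sqrtD + ρ = S.sqrtD * (1 + (ρ / S.D) * S.sqrtD) := by
      have h1 : ρ / S.D * S.D = ρ := div_mul_cancel₀ _ S.hD0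
      linear_combination (-(ρ / S.D)) * S.hsq - h1
    rw [hident, S.hχm _ _ S.sqrtD_ne (S.f_unit hmF hmV).1]
    rfl
  have hmem : ∀ ρ (hρ : ρ ∈ S.R.filter (fun ρ => S.Qc i ρ)),
      S.rep (ρ / S.D) ∈ S.R.filter (fun ρ => S.Qc i ρ) := by
    intro ρ hρ
    obtain ⟨hρR, hρQ⟩ := Finset.mem_filter.mp hρ
    obtain ⟨hmF, hmV⟩ := hdata ρ hρR
    have hrep := S.rep_spec hmF hmV
    have hv : S.Vge S.c (S.rep (ρ / S.D) - ρ / S.D) := by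
      have := S.Vge_neg hrep.2; rwa [neg_sub] at this
    exact Finset.mem_filter.mpr ⟨hrep.1, S.Qc_congr hv (S.Qc_div_D hρQ)⟩
  have hinj : ∀ ρ₁ (h1 : ρ₁ ∈ S.R.filter (fun ρ => S.Qc i ρ))
      ρ₂ (h2 : ρ₂ ∈ S.R.filter (fun ρ => S.Qc i ρ)),
      S.rep (ρ₁ / S.D) = S.rep (ρ₂ / S.D) → ρ₁ = ρ₂ := by
    intro ρ₁ h1 ρ₂ h2 heq
    obtain ⟨h1R, -⟩ := Finset.mem_filter.mp h1
    obtain ⟨h2R, -⟩ := Finset.mem_filter.mp h2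
    obtain ⟨hm1F, hm1V⟩ := hdata ρ₁ h1R
    obtain ⟨hm2F, hm2V⟩ := hdata ρ₂ h2R
    have hr1 := S.rep_spec hm1F hm1V
    have hr2 := S.rep_spec hm2F hm2V
    rw [heq] at hr1
    have hΔ : S.Vge S.c (ρ₁ / S.D - ρ₂ / S.D) := by
      have h3 := S.Vge_sub hr1.2 hr2.2
      have he : (ρ₁ / S.D - S.rep (ρ₂ / S.D)) - (ρ₂ / S.D - S.rep (ρ₂ / S.D))
          = ρ₁ / S.D - ρ₂ / S.D := by ring
      rwa [he] at h3
    have hρΔ : S.Vge S.c (ρ₁ - ρ₂) := by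
      have h4 := S.Vge_mul_unit hΔ S.hD0 S.hDv
      have he : (ρ₁ / S.D - ρ₂ / S.D) * S.D = ρ₁ - ρ₂ := by
        rw [div_sub_div_same, div_mul_cancel₀ _ S.hD0]
      rwa [he] at h4
    exact S.R_eq_of_cl h1R h2R hρΔ
  have hbij : (∑ ρ ∈ S.R.filter (fun ρ => S.Qc i ρ), S.f (ρ / S.D))
      = ∑ ρ ∈ S.R.filter (fun ρ => S.Qc i ρ), S.f ρ := by
    apply Finset.sum_bij (i := fun ρ _ => S.rep (ρ / S.D)) hmem hinj
    · intro b hb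
      obtain ⟨a, ha, he⟩ := Finset.surj_on_of_inj_on_of_card_le
        (fun ρ _ => S.rep (ρ / S.D)) hmem (fun a₁ a₂ h₁ h₂ => hinj a₁ h₁ a₂ h₂) le_rfl b hb
      exact ⟨a, ha, he.symm⟩
    · intro ρ hρ
      obtain ⟨hρR, -⟩ := Finset.mem_filter.mp hρ
      obtain ⟨hmF, hmV⟩ := hdata ρ hρR
      have hrep := S.rep_spec hmF hmV
      exact S.f_congr hmF (S.hR1 _ hrep.1).1 hmV (S.hR1 _ hrep.1).2 hrep.2
  calc (∑ ρ ∈ S.R, if S.Qc i ρ then S.χ (S.sqrtD + ρ) else 0)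
      = ∑ ρ ∈ S.R.filter (fun ρ => S.Qc i ρ), S.χ (S.sqrtD + ρ) := by
        rw [Finset.sum_filter]
    _ = ∑ ρ ∈ S.R.filter (fun ρ => S.Qc i ρ), S.χ S.sqrtD * S.f (ρ / S.D) :=
        Finset.sum_congr rfl step1
    _ = S.χ S.sqrtD * ∑ ρ ∈ S.R.filter (fun ρ => S.Qc i ρ), S.f (ρ / S.D) := by
        rw [Finset.mul_sum]
    _ = S.χ S.sqrtD * ∑ ρ ∈ S.R.filter (fun ρ => S.Qc i ρ), S.f ρ := by rw [hbij]
    _ = S.χ S.sqrtD * ∑ ρ ∈ S.R, if S.Qc i ρ then S.f ρ else 0 := by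
        rw [Finset.sum_filter]

theorem first_top : (∑ ρ ∈ S.R, if S.Qc S.c ρ then S.f ρ else 0) = 1 := by
  have hcond : ∀ ρ : E, (if S.Qc S.c ρ then S.f ρ else 0)
      = (if ρ = 0 ∨ S.c ≤ S.v ρ then S.f ρ else 0) := by
    intro ρ
    refine if_congr ⟨?_, ?_⟩ rfl rfl
    · rintro (⟨-, h⟩ | ⟨h, -⟩)
      · exact h
      · omega
    · intro h; exact Or.inl ⟨rfl, h⟩
  rw [Finset.sum_congr rfl (fun ρ _ => hcond ρ)]
  exact S.T_top

theorem main2 (hc2 : 2 ≤ S.c)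
    (hgen : ∀ x : E, ∃ a ∈ S.F, ∃ b ∈ S.F, x = a + b * S.sqrtD)
    (hnt : ∃ x : E, (x = 0 ∨ S.c - 1 ≤ S.v x) ∧ S.χ (1 + x) ≠ 1)
    (i : ℤ) (hi0 : 0 ≤ i) (hic : i ≤ S.c) :
    (∑ ρ ∈ S.R, if S.Qc i ρ then S.f ρ else 0)
      = if i = S.c then 1 else if i = S.c - 1 then -1 else 0 := by
  classical
  obtain ⟨t, htF, ht0, htv, htf⟩ := S.exists_t hc2 hgen hnt
  by_cases hiC : i = S.c
  · subst hiC; rw [if_pos rfl]; exact S.first_top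
  have hilt : i < S.c := lt_of_le_of_ne hic hiC
  have hcond : ∀ ρ : E, (if S.Qc i ρ then S.f ρ else 0)
      = (if ρ ≠ 0 ∧ S.v ρ = i then S.f ρ else 0) := by
    intro ρ
    refine if_congr ⟨?_, ?_⟩ rfl rfl
    · rintro (⟨h, -⟩ | ⟨-, h⟩)
      · exact absurd h hiC
      · exact h
    · intro h; exact Or.inr ⟨hilt, h⟩
  have hsplit : ∀ ρ : E, (if ρ = 0 ∨ i ≤ S.v ρ then S.f ρ else 0)
      = (if ρ ≠ 0 ∧ S.v ρ = i then S.f ρ else 0)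
        + (if ρ = 0 ∨ i + 1 ≤ S.v ρ then S.f ρ else 0) := by
    intro ρ
    by_cases h0 : ρ = 0
    · subst h0
      rw [if_pos (Or.inl rfl), if_neg (by tauto), if_pos (Or.inl rfl), zero_add]
    by_cases hvi : S.v ρ = i
    · rw [if_pos (Or.inr (le_of_eq hvi.symm)), if_pos ⟨h0, hvi⟩,
        if_neg (by push_neg; exact ⟨h0, by omega⟩), add_zero]
    by_cases hge : i ≤ S.v ρ
    · rw [if_pos (Or.inr hge), if_neg (by tauto), if_pos (Or.inr (by omega)), zero_add]
    · rw [if_neg (by push_neg; exact ⟨h0, by omega⟩), if_neg (by tauto),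
        if_neg (by push_neg; exact ⟨h0, by omega⟩), add_zero]
  have hTi : (∑ ρ ∈ S.R, if ρ = 0 ∨ i ≤ S.v ρ then S.f ρ else 0) = 0 :=
    S.T_vanish hc2 htF ht0 htv htf hi0 (by omega)
  have hsum := Finset.sum_congr rfl (fun ρ (_ : ρ ∈ S.R) => hsplit ρ)
  rw [Finset.sum_add_distrib, hTi] at hsum
  rw [Finset.sum_congr rfl (fun ρ _ => hcond ρ), if_neg hiC]
  by_cases hi1 : i = S.c - 1
  · rw [if_pos hi1]
    have hT1 : (∑ ρ ∈ S.R, if ρ = 0 ∨ i + 1 ≤ S.v ρ then S.f ρ else 0) = 1 := by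
      have he : i + 1 = S.c := by omega
      simp only [he]
      exact S.T_top
    rw [hT1] at hsum
    linear_combination -hsum
  · rw [if_neg hi1]
    have hT1 : (∑ ρ ∈ S.R, if ρ = 0 ∨ i + 1 ≤ S.v ρ then S.f ρ else 0) = 0 :=
      S.T_vanish hc2 htF ht0 htv htf (by omega) (by omega)
    rw [hT1] at hsum
    linear_combination -hsum

theorem main1 (hc1 : S.c = 1)
    (hgen : ∀ x : E, ∃ a ∈ S.F, ∃ b ∈ S.F, x = a + b * S.sqrtD)
    (hnt : ∃ u : E, u ≠ 0 ∧ S.v u = 0 ∧ S.χ u ≠ 1) :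
    (∑ ρ ∈ S.R, S.f ρ) + S.χ S.sqrtD = 0 := by
  classical
  obtain ⟨u, hu0, huv, huχ⟩ := hnt
  obtain ⟨x, hxF, y, hyF, hu⟩ := hgen u
  have hu0' : x + y * S.sqrtD ≠ 0 := hu ▸ hu0
  have huv' : S.v (x + y * S.sqrtD) = 0 := hu ▸ huv
  have huχ' : S.χ (x + y * S.sqrtD) ≠ 1 := hu ▸ huχ
  obtain ⟨hVx, hVy⟩ := S.pair_Vge hxF hyF (Or.inr (le_of_eq huv'.symm))
  have hy0 : y ≠ 0 := by
    rintro rfl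
    rw [zero_mul, add_zero] at hu0' huv' huχ'
    exact huχ' (S.hχF x hxF hu0' huv')
  have hyv : S.v y = 0 := by
    by_contra hne
    have hyv1 : 1 ≤ S.v y := by
      have := hVy.resolve_left hy0; omega
    have hx0 : x ≠ 0 := by
      rintro rfl
      rw [zero_add, S.hvmul y _ hy0 S.sqrtD_ne, S.v_sqrtD] at huv'
      omega
    have hxv : S.v x = 0 := by
      have hmin := S.hinert x y hxF hyF hx0 hy0
      rw [huv'] at hmin
      have hx := hVx.resolve_left hx0
      omega
    apply huχ'
    have htF : y / x ∈ S.F := S.F.div_mem hyF hxF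
    have htV : S.Vge S.c (y / x) := Or.inr (by rw [S.v_div hy0 hx0, hxv, hc1]; omega)
    have hident : x + y * S.sqrtD = x * (1 + (y / x) * S.sqrtD) := by
      field_simp [hx0]
    rw [hident, S.hχm _ _ hx0 (S.f_unit htF (S.Vge_mono (by omega) htV)).1,
      S.hχF x hxF hx0 hxv, one_mul]
    exact S.f_one htV
  -- the conjugate and the determinant x² - y²D
  have hnegyF : -y ∈ S.F := S.F.neg_mem hyF
  have hub : x + (-y) * S.sqrtD ≠ 0 ∧ S.v (x + (-y) * S.sqrtD) = 0 :=
    S.pair_unit hxF hnegyF hVx (S.Vge_neg hVy)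
      (Or.inr ⟨neg_ne_zero.mpr hy0, by rw [S.v_neg hy0, hyv]⟩)
  have hdetid : x * x - y * y * S.D = (x + y * S.sqrtD) * (x + (-y) * S.sqrtD) := by
    linear_combination (y * y) * S.hsq
  have hdet0 : x * x - y * y * S.D ≠ 0 := by rw [hdetid]; exact mul_ne_zero hu0' hub.1
  have hdetv : S.v (x * x - y * y * S.D) = 0 := by
    rw [hdetid, S.hvmul _ _ hu0' hub.1, huv', hub.2]; norm_num
  have hyD0 : y * S.D ≠ 0 := mul_ne_zero hy0 S.hD0
  have hyDv : S.v (y * S.D) = 0 := by rw [S.hvmul _ _ hy0 S.hD0, hyv, S.hDv]; norm_num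
  -- the fixed image of the point at infinity
  have hw0F : x / (y * S.D) ∈ S.F := S.F.div_mem hxF (S.F.mul_mem hyF S.hDF)
  have hw0V : S.Vge 0 (x / (y * S.D)) := S.Vge_div_unit hVx hyD0 hyDv
  have hw0rep := S.rep_spec hw0F hw0V
  -- per-element data
  have hαβ : ∀ ρ ∈ S.R,
      (x + y * ρ * S.D ∈ S.F ∧ S.Vge 0 (x + y * ρ * S.D)) ∧
      (y + x * ρ ∈ S.F ∧ S.Vge 0 (y + x * ρ)) ∧
      x + y * ρ * S.D + (y + x * ρ) * S.sqrtD ≠ 0 ∧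
      S.v (x + y * ρ * S.D + (y + x * ρ) * S.sqrtD) = 0 ∧
      S.χ (x + y * S.sqrtD) * S.f ρ = S.χ (x + y * ρ * S.D + (y + x * ρ) * S.sqrtD) := by
    intro ρ hρ
    obtain ⟨hρF, hρV⟩ := S.hR1 ρ hρ
    have hαF : x + y * ρ * S.D ∈ S.F :=
      S.F.add_mem hxF (S.F.mul_mem (S.F.mul_mem hyF hρF) S.hDF)
    have hαV : S.Vge 0 (x + y * ρ * S.D) := by
      apply S.Vge_add hVx
      apply S.Vge_mul_unit _ S.hD0 S.hDv
      have := S.Vge_mul hVy hρV; simpa using this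
    have hβF : y + x * ρ ∈ S.F := S.F.add_mem hyF (S.F.mul_mem hxF hρF)
    have hβV : S.Vge 0 (y + x * ρ) := by
      apply S.Vge_add hVy
      have := S.Vge_mul hVx hρV; simpa using this
    have hfρ := S.f_unit hρF hρV
    have hident : (x + y * S.sqrtD) * (1 + ρ * S.sqrtD)
        = x + y * ρ * S.D + (y + x * ρ) * S.sqrtD := by
      linear_combination (y * ρ) * S.hsq
    have hne : x + y * ρ * S.D + (y + x * ρ) * S.sqrtD ≠ 0 := by
      rw [← hident]; exact mul_ne_zero hu0' hfρ.1
    have hv : S.v (x + y * ρ * S.D + (y + x * ρ) * S.sqrtD) = 0 := by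
      rw [← hident, S.hvmul _ _ hu0' hfρ.1, huv', hfρ.2]; norm_num
    refine ⟨⟨hαF, hαV⟩, ⟨hβF, hβV⟩, hne, hv, ?_⟩
    have hfdef : S.f ρ = S.χ (1 + ρ * S.sqrtD) := rfl
    rw [hfdef, ← S.hχm _ _ hu0' hfρ.1, hident]
  -- the permutation
  set τ : Option E → Option E := fun o => Option.elim o (some (S.rep (x / (y * S.D))))
    (fun ρ => if x + y * ρ * S.D = 0 ∨ S.c ≤ S.v (x + y * ρ * S.D) then none
      else some (S.rep ((y + x * ρ) / (x + y * ρ * S.D)))) with hτ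
  have hτnone : τ none = some (S.rep (x / (y * S.D))) := rfl
  have hτsome : ∀ ρ : E, τ (some ρ)
      = if x + y * ρ * S.D = 0 ∨ S.c ≤ S.v (x + y * ρ * S.D) then none
        else some (S.rep ((y + x * ρ) / (x + y * ρ * S.D))) := fun ρ => rfl
  -- data in the "finite" branch
  have hmdata : ∀ ρ ∈ S.R, ¬(x + y * ρ * S.D = 0 ∨ S.c ≤ S.v (x + y * ρ * S.D)) →
      (x + y * ρ * S.D ≠ 0 ∧ S.v (x + y * ρ * S.D) = 0) ∧
      ((y + x * ρ) / (x + y * ρ * S.D) ∈ S.F ∧ S.Vge 0 ((y + x * ρ) / (x + y * ρ * S.D))) := by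
    intro ρ hρ hnα
    obtain ⟨⟨hαF, hαV⟩, ⟨hβF, hβV⟩, -, -, -⟩ := hαβ ρ hρ
    push_neg at hnα
    have hα0 : x + y * ρ * S.D ≠ 0 := hnα.1
    have hαv : S.v (x + y * ρ * S.D) = 0 := by
      have := hαV.resolve_left hα0; omega
    exact ⟨⟨hα0, hαv⟩, S.F.div_mem hβF hαF, S.Vge_div_unit hβV hα0 hαv⟩
  -- membership and multiplication rule
  have hstep : ∀ o ∈ (insert none (S.R.image some) : Finset (Option E)),
      τ o ∈ (insert none (S.R.image some) : Finset (Option E)) ∧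
      S.χ (x + y * S.sqrtD) * Option.elim o (S.χ S.sqrtD) S.f
        = Option.elim (τ o) (S.χ S.sqrtD) S.f := by
    intro o ho
    rcases Finset.mem_insert.mp ho with rfl | hsome
    · -- o = none
      refine ⟨by rw [hτnone]; exact Finset.mem_insert_of_mem (Finset.mem_image_of_mem _ hw0rep.1), ?_⟩
      rw [hτnone]
      have h1 : x / (y * S.D) * (y * S.D) = x := div_mul_cancel₀ _ hyD0
      have hident : (x + y * S.sqrtD) * S.sqrtD
          = (y * S.D) * (1 + (x / (y * S.D)) * S.sqrtD) := by
        linear_combination y * S.hsq - S.sqrtD * h1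
      show S.χ (x + y * S.sqrtD) * S.χ S.sqrtD = S.f (S.rep (x / (y * S.D)))
      rw [← S.hχm _ _ hu0' S.sqrtD_ne, hident,
        S.hχm _ _ hyD0 (S.f_unit hw0F hw0V).1,
        S.hχF _ (S.F.mul_mem hyF S.hDF) hyD0 hyDv, one_mul]
      exact (S.f_congr hw0F (S.hR1 _ hw0rep.1).1 hw0V (S.hR1 _ hw0rep.1).2 hw0rep.2).symm ▸ rfl
    · obtain ⟨ρ, hρR, rfl⟩ := Finset.mem_image.mp hsome
      obtain ⟨⟨hαF, hαV⟩, ⟨hβF, hβV⟩, hne, hv, hval⟩ := hαβ ρ hρR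
      by_cases hα : x + y * ρ * S.D = 0 ∨ S.c ≤ S.v (x + y * ρ * S.D)
      · refine ⟨by rw [hτsome, if_pos hα]; exact Finset.mem_insert_self _ _, ?_⟩
        rw [hτsome, if_pos hα]
        show S.χ (x + y * S.sqrtD) * S.f ρ = S.χ S.sqrtD
        rw [hval]
        -- β is a unit
        have hβu : y + x * ρ ≠ 0 ∧ S.v (y + x * ρ) = 0 := by
          by_cases hβ0 : y + x * ρ = 0
          · exfalso
            rw [hβ0, zero_mul, add_zero] at hne hv
            rcases hα with h | h
            · exact hne h
            · rw [hv] at h; omega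
          · refine ⟨hβ0, ?_⟩
            by_cases hα0 : x + y * ρ * S.D = 0
            · rw [hα0, zero_add, S.hvmul _ _ hβ0 S.sqrtD_ne, S.v_sqrtD] at hv
              omega
            · have hmin := S.hinert _ _ hαF hβF hα0 hβ0
              rw [hv] at hmin
              have h1 := (hα.resolve_left hα0)
              have h2 := hβV.resolve_left hβ0
              omega
        have hβD0 : (y + x * ρ) * S.D ≠ 0 := mul_ne_zero hβu.1 S.hD0
        have hβDv : S.v ((y + x * ρ) * S.D) = 0 := by
          rw [S.hvmul _ _ hβu.1 S.hD0, hβu.2, S.hDv]; norm_num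
        have hmF : (x + y * ρ * S.D) / ((y + x * ρ) * S.D) ∈ S.F :=
          S.F.div_mem hαF (S.F.mul_mem hβF S.hDF)
        have hmVc : S.Vge S.c ((x + y * ρ * S.D) / ((y + x * ρ) * S.D)) :=
          S.Vge_div_unit (hα : S.Vge S.c _) hβD0 hβDv
        have hmV0 : S.Vge 0 ((x + y * ρ * S.D) / ((y + x * ρ) * S.D)) :=
          S.Vge_mono (by omega) hmVc
        have h1 : (x + y * ρ * S.D) / ((y + x * ρ) * S.D) * ((y + x * ρ) * S.D)
            = x + y * ρ * S.D := div_mul_cancel₀ _ hβD0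
        have hident2 : x + y * ρ * S.D + (y + x * ρ) * S.sqrtD
            = (y + x * ρ) * (S.sqrtD * (1 + ((x + y * ρ * S.D) / ((y + x * ρ) * S.D))
              * S.sqrtD)) := by
          linear_combination (-((y + x * ρ) * ((x + y * ρ * S.D) / ((y + x * ρ) * S.D))))
            * S.hsq - h1
        have hin : 1 + (x + y * ρ * S.D) / ((y + x * ρ) * S.D) * S.sqrtD ≠ 0 :=
          (S.f_unit hmF hmV0).1
        rw [hident2, S.hχm _ _ hβu.1 (mul_ne_zero S.sqrtD_ne hin),
          S.hχF _ hβF hβu.1 hβu.2, one_mul, S.hχm _ _ S.sqrtD_ne hin]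
        have : S.χ (1 + (x + y * ρ * S.D) / ((y + x * ρ) * S.D) * S.sqrtD) = 1 :=
          S.f_one hmVc
        rw [this, mul_one]
      · obtain ⟨⟨hα0, hαv⟩, hmF, hmV⟩ := hmdata ρ hρR hα
        have hrep := S.rep_spec hmF hmV
        refine ⟨by rw [hτsome, if_neg hα]
                   exact Finset.mem_insert_of_mem (Finset.mem_image_of_mem _ hrep.1), ?_⟩
        rw [hτsome, if_neg hα]
        show S.χ (x + y * S.sqrtD) * S.f ρ
          = S.f (S.rep ((y + x * ρ) / (x + y * ρ * S.D)))
        rw [hval]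
        have hident3 : x + y * ρ * S.D + (y + x * ρ) * S.sqrtD
            = (x + y * ρ * S.D) * (1 + ((y + x * ρ) / (x + y * ρ * S.D)) * S.sqrtD) := by
          have h1 : (y + x * ρ) / (x + y * ρ * S.D) * (x + y * ρ * S.D) = y + x * ρ :=
            div_mul_cancel₀ _ hα0
          linear_combination (- S.sqrtD) * h1
        rw [hident3, S.hχm _ _ hα0 (S.f_unit hmF hmV).1, S.hχF _ hαF hα0 hαv, one_mul]
        exact S.f_congr hmF (S.hR1 _ hrep.1).1 hmV (S.hR1 _ hrep.1).2 hrep.2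
  -- injectivity
  have himposs : ∀ ρ ∈ S.R, ∀ (hnα : ¬(x + y * ρ * S.D = 0 ∨ S.c ≤ S.v (x + y * ρ * S.D))),
      S.rep (x / (y * S.D)) ≠ S.rep ((y + x * ρ) / (x + y * ρ * S.D)) := by
    intro ρ hρR hnα heq
    obtain ⟨⟨hα0, hαv⟩, hmF, hmV⟩ := hmdata ρ hρR hnα
    have hrep := S.rep_spec hmF hmV
    rw [← heq] at hrep
    have hΔ : S.Vge S.c (x / (y * S.D) - (y + x * ρ) / (x + y * ρ * S.D)) := by
      have h3 := S.Vge_sub hw0rep.2 hrep.2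
      have he : (x / (y * S.D) - S.rep (x / (y * S.D)))
          - ((y + x * ρ) / (x + y * ρ * S.D) - S.rep (x / (y * S.D)))
          = x / (y * S.D) - (y + x * ρ) / (x + y * ρ * S.D) := by ring
      rwa [he] at h3
    have he2 : x / (y * S.D) - (y + x * ρ) / (x + y * ρ * S.D)
        = (x * x - y * y * S.D) / ((x + y * ρ * S.D) * (y * S.D)) := by
      rw [div_sub_div _ _ hyD0 hα0, div_eq_div_iff (mul_ne_zero hyD0 hα0) (mul_ne_zero hα0 hyD0)]
      ring
    rw [he2] at hΔ
    rcases hΔ with h | h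
    · exact (div_ne_zero hdet0 (mul_ne_zero hα0 hyD0)) h
    · rw [S.v_div hdet0 (mul_ne_zero hα0 hyD0), hdetv,
        S.hvmul _ _ hα0 hyD0, hαv, hyDv] at h
      omega
  have hinj : ∀ o₁ (h1 : o₁ ∈ (insert none (S.R.image some) : Finset (Option E)))
      o₂ (h2 : o₂ ∈ (insert none (S.R.image some) : Finset (Option E))),
      τ o₁ = τ o₂ → o₁ = o₂ := by
    intro o₁ h1 o₂ h2 heq
    rcases Finset.mem_insert.mp h1 with rfl | hsome1
    · rcases Finset.mem_insert.mp h2 with rfl | hsome2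
      · rfl
      · exfalso
        obtain ⟨ρ, hρR, rfl⟩ := Finset.mem_image.mp hsome2
        rw [hτnone, hτsome] at heq
        by_cases hα : x + y * ρ * S.D = 0 ∨ S.c ≤ S.v (x + y * ρ * S.D)
        · rw [if_pos hα] at heq; cases heq
        · rw [if_neg hα] at heq
          exact himposs ρ hρR hα (Option.some_injective _ heq)
    · rcases Finset.mem_insert.mp h2 with rfl | hsome2
      · exfalso
        obtain ⟨ρ, hρR, rfl⟩ := Finset.mem_image.mp hsome1
        rw [hτnone, hτsome] at heq
        by_cases hα : x + y * ρ * S.D = 0 ∨ S.c ≤ S.v (x + y * ρ * S.D)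
        · rw [if_pos hα] at heq; cases heq
        · rw [if_neg hα] at heq
          exact himposs ρ hρR hα (Option.some_injective _ heq.symm)
      · obtain ⟨ρ₁, hρ1R, rfl⟩ := Finset.mem_image.mp hsome1
        obtain ⟨ρ₂, hρ2R, rfl⟩ := Finset.mem_image.mp hsome2
        rw [hτsome, hτsome] at heq
        by_cases hα1 : x + y * ρ₁ * S.D = 0 ∨ S.c ≤ S.v (x + y * ρ₁ * S.D)
          <;> by_cases hα2 : x + y * ρ₂ * S.D = 0 ∨ S.c ≤ S.v (x + y * ρ₂ * S.D)
        · -- both in the zero branch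
          rw [if_pos hα1, if_pos hα2] at heq
          have hΔ : S.Vge S.c ((x + y * ρ₁ * S.D) - (x + y * ρ₂ * S.D)) :=
            S.Vge_sub (hα1 : S.Vge S.c _) (hα2 : S.Vge S.c _)
          have hΔ2 : S.Vge S.c (ρ₁ - ρ₂) := by
            have h4 := S.Vge_div_unit hΔ hyD0 hyDv
            have he : ((x + y * ρ₁ * S.D) - (x + y * ρ₂ * S.D)) / (y * S.D) = ρ₁ - ρ₂ := by
              rw [div_eq_iff hyD0]
              ring
            rwa [he] at h4
          rw [S.R_eq_of_cl hρ1R hρ2R hΔ2]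
        · rw [if_pos hα1, if_neg hα2] at heq; cases heq
        · rw [if_neg hα1, if_pos hα2] at heq; cases heq
        · rw [if_neg hα1, if_neg hα2] at heq
          have heq' := Option.some_injective _ heq
          obtain ⟨⟨hα10, hα1v⟩, hm1F, hm1V⟩ := hmdata ρ₁ hρ1R hα1
          obtain ⟨⟨hα20, hα2v⟩, hm2F, hm2V⟩ := hmdata ρ₂ hρ2R hα2
          have hr1 := S.rep_spec hm1F hm1V
          have hr2 := S.rep_spec hm2F hm2V
          rw [heq'] at hr1
          have hΔ : S.Vge S.c ((y + x * ρ₁) / (x + y * ρ₁ * S.D)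
              - (y + x * ρ₂) / (x + y * ρ₂ * S.D)) := by
            have h3 := S.Vge_sub hr1.2 hr2.2
            have he : ((y + x * ρ₁) / (x + y * ρ₁ * S.D)
                  - S.rep ((y + x * ρ₂) / (x + y * ρ₂ * S.D)))
                - ((y + x * ρ₂) / (x + y * ρ₂ * S.D)
                  - S.rep ((y + x * ρ₂) / (x + y * ρ₂ * S.D)))
                = (y + x * ρ₁) / (x + y * ρ₁ * S.D) - (y + x * ρ₂) / (x + y * ρ₂ * S.D) := by
              ring
            rwa [he] at h3
          have hΔ2 : S.Vge S.c (ρ₁ - ρ₂) := by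
            have h5 := S.Vge_div_unit (S.Vge_mul_unit (S.Vge_mul_unit hΔ hα10 hα1v)
              hα20 hα2v) hdet0 hdetv
            have he : ((y + x * ρ₁) / (x + y * ρ₁ * S.D) - (y + x * ρ₂) / (x + y * ρ₂ * S.D))
                * (x + y * ρ₁ * S.D) * (x + y * ρ₂ * S.D) / (x * x - y * y * S.D)
                = ρ₁ - ρ₂ := by
              rw [div_sub_div _ _ hα10 hα20, div_mul_eq_mul_div, div_mul_eq_mul_div, div_div,
                div_eq_iff (mul_ne_zero (mul_ne_zero hα10 hα20) hdet0)]
              ring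
            rwa [he] at h5
          rw [S.R_eq_of_cl hρ1R hρ2R hΔ2]
  -- assembling
  have hnone : (none : Option E) ∉ S.R.image some := by simp
  have hinjsome : ∀ a ∈ S.R, ∀ b ∈ S.R, (some a : Option E) = some b → a = b :=
    fun a _ b _ h => Option.some_injective _ h
  have hsum_s : ∑ o ∈ (insert none (S.R.image some) : Finset (Option E)),
      Option.elim o (S.χ S.sqrtD) S.f = (∑ ρ ∈ S.R, S.f ρ) + S.χ S.sqrtD := by
    rw [Finset.sum_insert hnone, Finset.sum_image hinjsome]
    simp only [Option.elim]
    ring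
  have hbij : ∑ o ∈ (insert none (S.R.image some) : Finset (Option E)),
      S.χ (x + y * S.sqrtD) * Option.elim o (S.χ S.sqrtD) S.f
      = ∑ o ∈ (insert none (S.R.image some) : Finset (Option E)),
        Option.elim o (S.χ S.sqrtD) S.f := by
    apply Finset.sum_bij (i := fun o _ => τ o) (fun o ho => (hstep o ho).1) hinj
    · intro b hb
      obtain ⟨a, ha, he⟩ := Finset.surj_on_of_inj_on_of_card_le
        (fun o _ => τ o) (fun o ho => (hstep o ho).1)
        (fun a₁ a₂ ha₁ ha₂ => hinj a₁ ha₁ a₂ ha₂) le_rfl b hb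
      exact ⟨a, ha, he.symm⟩
    · exact fun o ho => (hstep o ho).2
  have hkey : S.χ (x + y * S.sqrtD) * ((∑ ρ ∈ S.R, S.f ρ) + S.χ S.sqrtD)
      = (∑ ρ ∈ S.R, S.f ρ) + S.χ S.sqrtD := by
    rw [← hsum_s, Finset.mul_sum]
    exact hbij
  have h0 : (S.χ (x + y * S.sqrtD) - 1) * ((∑ ρ ∈ S.R, S.f ρ) + S.χ S.sqrtD) = 0 := by
    linear_combination hkey
  rcases mul_eq_zero.mp h0 with h | h
  · exact absurd (by linear_combination h) huχ'
  · exact h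

end Setup
end Stmt11

/-- Character sums over `O_F/ϖᶜO_F` for a quasi-character `χ` of `Eˣ`
of level `c ≥ 1` (with `E/F` unramified quadratic) whose restriction to `Fˣ` is
unramified.  `R` is any complete set of representatives of `O_F/ϖᶜO_F`; `v(b) = i` for
a class means any representative has valuation `i` (for `i < c`), and `v(b) = c` means
the class of `0`.  The sums are as stated. -/
theorem stmt_11
    (E : Type*) [Field E] (F : Subfield E)
    (v : E → ℤ) (ϖ : E) (q : ℕ) (hq : 2 ≤ q)
    (hϖF : ϖ ∈ F) (hϖ0 : ϖ ≠ 0) (hϖv : v ϖ = 1)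
    (hvmul : ∀ x y : E, x ≠ 0 → y ≠ 0 → v (x * y) = v x + v y)
    (hvadd : ∀ x y : E, x ≠ 0 → y ≠ 0 → x + y ≠ 0 → min (v x) (v y) ≤ v (x + y))
    (hodd : (2 : E) ≠ 0 ∧ v 2 = 0)
    (D sqrtD : E) (hDF : D ∈ F) (hD0 : D ≠ 0) (hDv : v D = 0)
    (hDns : ¬ ∃ y ∈ F, y * y = D)
    (hsq : sqrtD * sqrtD = D)
    (hgen : ∀ x : E, ∃ a ∈ F, ∃ b ∈ F, x = a + b * sqrtD)
    (hinert : ∀ a b : E, a ∈ F → b ∈ F → a ≠ 0 → b ≠ 0 →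
        v (a + b * sqrtD) = min (v a) (v b))
    (χ : E → ℂ)
    (hχm : ∀ x y : E, x ≠ 0 → y ≠ 0 → χ (x * y) = χ x * χ y)
    (hχ0 : ∀ x : E, x ≠ 0 → χ x ≠ 0)
    (c : ℤ) (hc : 1 ≤ c)
    (hχtriv : ∀ x : E, (x = 0 ∨ c ≤ v x) → χ (1 + x) = 1)
    (hχnt1 : 1 < c → ∃ x : E, (x = 0 ∨ c - 1 ≤ v x) ∧ χ (1 + x) ≠ 1)
    (hχnt2 : c = 1 → ∃ u : E, u ≠ 0 ∧ v u = 0 ∧ χ u ≠ 1)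
    (hχF : ∀ x : E, x ∈ F → x ≠ 0 → v x = 0 → χ x = 1)
    (R : Finset E)
    (hR1 : ∀ ρ ∈ R, ρ ∈ F ∧ (ρ = 0 ∨ 0 ≤ v ρ))
    (hR2 : ∀ y : E, y ∈ F → (y = 0 ∨ 0 ≤ v y) →
        ∃! ρ, ρ ∈ R ∧ (y - ρ = 0 ∨ c ≤ v (y - ρ))) :
    (2 ≤ c → ∀ i : ℤ, 0 ≤ i → i ≤ c →
      ((∑ ρ ∈ R, if (i = c ∧ (ρ = 0 ∨ c ≤ v ρ)) ∨ (i < c ∧ ρ ≠ 0 ∧ v ρ = i)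
          then χ (1 + ρ * sqrtD) else 0)
        = if i = c then 1 else if i = c - 1 then -1 else 0) ∧
      ((∑ ρ ∈ R, if (i = c ∧ (ρ = 0 ∨ c ≤ v ρ)) ∨ (i < c ∧ ρ ≠ 0 ∧ v ρ = i)
          then χ (sqrtD + ρ) else 0)
        = if i = c then χ sqrtD else if i = c - 1 then -(χ sqrtD) else 0)) ∧
    (c = 1 → (∑ ρ ∈ R, χ (1 + ρ * sqrtD)) + χ sqrtD = 0) := by
  classical
  let S : Stmt11.Setup E := {
    F := F, v := v, hvmul := hvmul, hvadd := hvadd, D := D, sqrtD := sqrtD,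
    hDF := hDF, hD0 := hD0, hDv := hDv, hDns := hDns, hsq := hsq, hinert := hinert,
    χ := χ, hχm := hχm, hχ0 := hχ0, c := c, hc := hc, hχtriv := hχtriv, hχF := hχF,
    R := R, hR1 := hR1, hR2 := hR2 }
  have hSc : S.c = c := rfl
  have hSχ : S.χ = χ := rfl
  have hSD : S.sqrtD = sqrtD := rfl
  refine ⟨fun hc2 i hi0 hic => ⟨?_, ?_⟩, fun hc1 => ?_⟩
  · have h := S.main2 hc2 hgen (hχnt1 (by omega)) i hi0 hic
    calc (∑ ρ ∈ R, if (i = c ∧ (ρ = 0 ∨ c ≤ v ρ)) ∨ (i < c ∧ ρ ≠ 0 ∧ v ρ = i)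
          then χ (1 + ρ * sqrtD) else 0)
        = ∑ ρ ∈ S.R, if S.Qc i ρ then S.f ρ else 0 :=
          Finset.sum_congr rfl (fun ρ _ => if_congr Iff.rfl rfl rfl)
      _ = if i = c then 1 else if i = c - 1 then -1 else 0 := by
          rw [← hSc]; exact h
  · have h2 := S.second_eq i
    have h1 := S.main2 hc2 hgen (hχnt1 (by omega)) i hi0 hic
    rw [h1, hSχ, hSD, hSc] at h2
    calc (∑ ρ ∈ R, if (i = c ∧ (ρ = 0 ∨ c ≤ v ρ)) ∨ (i < c ∧ ρ ≠ 0 ∧ v ρ = i)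
          then χ (sqrtD + ρ) else 0)
        = ∑ ρ ∈ S.R, if S.Qc i ρ then S.χ (S.sqrtD + ρ) else 0 :=
          Finset.sum_congr rfl (fun ρ _ => if_congr Iff.rfl rfl rfl)
      _ = χ sqrtD * (if i = c then 1 else if i = c - 1 then -1 else 0) := h2
      _ = if i = c then χ sqrtD else if i = c - 1 then -(χ sqrtD) else 0 := by
          split_ifs <;> ring
  · exact S.main1 hc1 hgen (hχnt2 hc1)
end

section
/- For every integer c ≥ 1, GL₂(F) is the disjoint union over i = 0, 1, …, c of the sets B(F)·[[1,0],[ϖⁱ,1]]·K₁(ϖᶜ) (where for i = c the factor [[1,0],[ϖᶜ,1]] lies in K₁(ϖᶜ), so that coset is B(F)·K₁(ϖᶜ)). -/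
section Aux
variable {F : Type*} [Field F] {v : F → ℤ} {ϖ : F}

lemma aux_v_one (hvmul : ∀ x y : F, x ≠ 0 → y ≠ 0 → v (x * y) = v x + v y) : v 1 = 0 := by
  have h := hvmul 1 1 one_ne_zero one_ne_zero
  rw [one_mul] at h; omega

lemma aux_v_neg (hvmul : ∀ x y : F, x ≠ 0 → y ≠ 0 → v (x * y) = v x + v y)
    {x : F} (hx : x ≠ 0) : v (-x) = v x := by
  have h1 := hvmul (-1) (-1) (by norm_num) (by norm_num)
  rw [neg_mul_neg, one_mul, aux_v_one hvmul] at h1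
  have h2 := hvmul (-1) x (by norm_num) hx
  rw [neg_one_mul] at h2
  omega

lemma aux_v_inv (hvmul : ∀ x y : F, x ≠ 0 → y ≠ 0 → v (x * y) = v x + v y)
    {x : F} (hx : x ≠ 0) : v x⁻¹ = - v x := by
  have h := hvmul x x⁻¹ hx (inv_ne_zero hx)
  rw [mul_inv_cancel₀ hx, aux_v_one hvmul] at h; omega

lemma aux_v_pow (hϖ0 : ϖ ≠ 0) (hϖv : v ϖ = 1)
    (hvmul : ∀ x y : F, x ≠ 0 → y ≠ 0 → v (x * y) = v x + v y)
    (n : ℕ) : v (ϖ ^ n) = n := by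
  induction n with
  | zero => simpa using aux_v_one hvmul
  | succ m ih =>
    rw [pow_succ, hvmul _ _ (pow_ne_zero _ hϖ0) hϖ0, ih, hϖv]; push_cast; ring

lemma aux_v_add_eq (hvmul : ∀ x y : F, x ≠ 0 → y ≠ 0 → v (x * y) = v x + v y)
    (hvadd : ∀ x y : F, x ≠ 0 → y ≠ 0 → x + y ≠ 0 → min (v x) (v y) ≤ v (x + y))
    {x y : F} (hx : x ≠ 0) (hy : y ≠ 0) (h : v x < v y) : x + y ≠ 0 ∧ v (x + y) = v x := by
  have hne : x + y ≠ 0 := by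
    intro h0
    have hyx : y = -x := by linear_combination h0
    rw [hyx, aux_v_neg hvmul hx] at h
    omega
  refine ⟨hne, ?_⟩
  have h1 := hvadd x y hx hy hne
  have h2 := hvadd (x + y) (-y) hne (neg_ne_zero.mpr hy) (by ring_nf; simpa using hx)
  rw [aux_v_neg hvmul hy] at h2
  have h3 : x + y + -y = x := by ring
  rw [h3] at h2
  omega

end Aux


lemma aux_factor {F : Type*} [Field F] (M N : Matrix (Fin 2) (Fin 2) F)
    (hM : M.det ≠ 0) (hN : N.det ≠ 0) (lam : F)
    (h0 : M 1 0 = lam * N 1 0) (h1 : M 1 1 = lam * N 1 1) :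
    ∃ b : Matrix (Fin 2) (Fin 2) F, b 1 0 = 0 ∧ b.det ≠ 0 ∧ M = b * N := by
  have hu : IsUnit N.det := isUnit_iff_ne_zero.mpr hN
  refine ⟨M * N⁻¹, ?_, ?_, ?_⟩
  · rw [Matrix.inv_def, Matrix.adjugate_fin_two]
    simp [Matrix.mul_apply, Fin.sum_univ_two, Ring.inverse_eq_inv']
    rw [h0, h1]; ring
  · rw [Matrix.det_mul, Matrix.det_nonsing_inv, Ring.inverse_eq_inv']
    exact mul_ne_zero hM (inv_ne_zero hN)
  · rw [Matrix.nonsing_inv_mul_cancel_right _ _ hu]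


section Aux2
variable {F : Type*} [Field F] {v : F → ℤ}
-- k 1 1 is a unit
lemma aux_k11 (hvmul : ∀ x y : F, x ≠ 0 → y ≠ 0 → v (x * y) = v x + v y)
    (hvadd : ∀ x y : F, x ≠ 0 → y ≠ 0 → x + y ≠ 0 → min (v x) (v y) ≤ v (x + y)) {c : ℕ} (hc : 1 ≤ c) {z : F} (h : z - 1 = 0 ∨ (c : ℤ) ≤ v (z - 1)) :
    z ≠ 0 ∧ v z = 0 := by
  rcases h with h | h
  · have : z = 1 := by linear_combination h
    subst this
    exact ⟨one_ne_zero, aux_v_one hvmul⟩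
  · by_cases h0 : z - 1 = 0
    · have : z = 1 := by linear_combination h0
      subst this
      exact ⟨one_ne_zero, aux_v_one hvmul⟩
    · have h1 : v (1 : F) < v (z - 1) := by
        rw [aux_v_one hvmul]; omega
      have := aux_v_add_eq hvmul hvadd one_ne_zero h0 h1
      have hz : (1 : F) + (z - 1) = z := by ring
      rw [hz] at this
      exact ⟨this.1, by rw [this.2, aux_v_one hvmul]⟩

-- k 0 0 is a unit
lemma aux_k00 (hvmul : ∀ x y : F, x ≠ 0 → y ≠ 0 → v (x * y) = v x + v y)
    (hvadd : ∀ x y : F, x ≠ 0 → y ≠ 0 → x + y ≠ 0 → min (v x) (v y) ≤ v (x + y))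
    {c : ℕ} (hc : 1 ≤ c) {k : Matrix (Fin 2) (Fin 2) F}
    (hint : ∀ i' j', k i' j' = 0 ∨ 0 ≤ v (k i' j'))
    (hkdet : k.det ≠ 0) (hkv : v k.det = 0)
    (hk10 : k 1 0 = 0 ∨ (c : ℤ) ≤ v (k 1 0))
    (hk11 : k 1 1 - 1 = 0 ∨ (c : ℤ) ≤ v (k 1 1 - 1)) :
    k 0 0 ≠ 0 ∧ v (k 0 0) = 0 := by
  obtain ⟨h11ne, h11v⟩ := aux_k11 hvmul hvadd hc hk11
  have hdet : k.det = k 0 0 * k 1 1 + -(k 0 1 * k 1 0) := by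
    rw [Matrix.det_fin_two]; ring
  by_contra hcon
  -- A := k 0 0 * k 1 1 : either 0 or v ≥ 1
  have hA : k 0 0 * k 1 1 = 0 ∨ (k 0 0 * k 1 1 ≠ 0 ∧ 1 ≤ v (k 0 0 * k 1 1)) := by
    by_cases h0 : k 0 0 = 0
    · exact Or.inl (by rw [h0, zero_mul])
    · refine Or.inr ⟨mul_ne_zero h0 h11ne, ?_⟩
      rw [hvmul _ _ h0 h11ne, h11v]
      rcases hint 0 0 with h | h
      · exact absurd h h0
      · have : v (k 0 0) ≠ 0 := fun he => hcon ⟨h0, he⟩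
        omega
  have hB : k 0 1 * k 1 0 = 0 ∨ (k 0 1 * k 1 0 ≠ 0 ∧ 1 ≤ v (k 0 1 * k 1 0)) := by
    by_cases h0 : k 0 1 = 0
    · exact Or.inl (by rw [h0, zero_mul])
    · by_cases h1 : k 1 0 = 0
      · exact Or.inl (by rw [h1, mul_zero])
      · refine Or.inr ⟨mul_ne_zero h0 h1, ?_⟩
        rw [hvmul _ _ h0 h1]
        rcases hint 0 1 with h | h
        · exact absurd h h0
        · rcases hk10 with h2 | h2
          · exact absurd h2 h1
          · omega
  rcases hA with hA | ⟨hAne, hAv⟩ <;> rcases hB with hB | ⟨hBne, hBv⟩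
  · rw [hdet, hA, hB] at hkdet; simp at hkdet
  · have : k.det = -(k 0 1 * k 1 0) := by rw [hdet, hA]; ring
    rw [this, aux_v_neg hvmul hBne] at hkv; omega
  · have : k.det = k 0 0 * k 1 1 := by rw [hdet, hB]; ring
    rw [this] at hkv; omega
  · have hmin := hvadd _ _ hAne (neg_ne_zero.mpr hBne) (by rw [← hdet]; exact hkdet)
    rw [← hdet, aux_v_neg hvmul hBne, hkv] at hmin
    omega

end Aux2


open Classical in
lemma aux_inv {F : Type*} [Field F] {v : F → ℤ} {ϖ : F}
    (hϖ0 : ϖ ≠ 0) (hϖv : v ϖ = 1)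
    (hvmul : ∀ x y : F, x ≠ 0 → y ≠ 0 → v (x * y) = v x + v y)
    (hvadd : ∀ x y : F, x ≠ 0 → y ≠ 0 → x + y ≠ 0 → min (v x) (v y) ≤ v (x + y))
    {c : ℕ} (hc : 1 ≤ c) (M : Matrix (Fin 2) (Fin 2) F)
    {i : ℕ} (hic : i ≤ c) {b k : Matrix (Fin 2) (Fin 2) F}
    (hb10 : b 1 0 = 0) (hbdet : b.det ≠ 0)
    (hint : ∀ i' j', k i' j' = 0 ∨ 0 ≤ v (k i' j'))
    (hkdet : k.det ≠ 0) (hkv : v k.det = 0)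
    (hk10 : k 1 0 = 0 ∨ (c : ℤ) ≤ v (k 1 0))
    (hk11 : k 1 1 - 1 = 0 ∨ (c : ℤ) ≤ v (k 1 1 - 1))
    (hM : M = b * !![1, 0; ϖ ^ i, 1] * k) :
    (if M 1 0 = 0 then (c : ℤ) else if M 1 1 = 0 then 0
      else max 0 (min (c : ℤ) (v (M 1 0) - v (M 1 1)))) = i := by
  obtain ⟨h11ne, h11v⟩ := aux_k11 hvmul hvadd hc hk11
  obtain ⟨h00ne, h00v⟩ := aux_k00 hvmul hvadd hc hint hkdet hkv hk10 hk11
  set β := b 1 1 with hβdef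
  have hβ : β ≠ 0 := by
    intro h0
    apply hbdet
    rw [Matrix.det_fin_two, hb10, ← hβdef, h0]; ring
  have e10 : M 1 0 = β * (ϖ ^ i * k 0 0 + k 1 0) := by
    rw [hM]
    simp [Matrix.mul_apply, Fin.sum_univ_two, hb10]
    ring
  have e11 : M 1 1 = β * (ϖ ^ i * k 0 1 + k 1 1) := by
    rw [hM]
    simp [Matrix.mul_apply, Fin.sum_univ_two, hb10]
    ring
  set x := ϖ ^ i * k 0 0 + k 1 0 with hx
  set y := ϖ ^ i * k 0 1 + k 1 1 with hy
  -- facts about x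
  have hxA : i < c → x ≠ 0 ∧ v x = i := by
    intro hlt
    have hv1 : v (ϖ ^ i * k 0 0) = i := by
      rw [hvmul _ _ (pow_ne_zero _ hϖ0) h00ne, aux_v_pow hϖ0 hϖv hvmul, h00v]; ring
    by_cases h10 : k 1 0 = 0
    · rw [hx, h10, add_zero]
      exact ⟨mul_ne_zero (pow_ne_zero _ hϖ0) h00ne, hv1⟩
    · have h : (c : ℤ) ≤ v (k 1 0) := (hk10).resolve_left h10
      have := aux_v_add_eq hvmul hvadd (mul_ne_zero (pow_ne_zero _ hϖ0) h00ne) h10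
        (by rw [hv1]; omega)
      rw [← hx] at this
      exact ⟨this.1, by rw [this.2, hv1]⟩
  have hxB : i = c → (x = 0 ∨ (x ≠ 0 ∧ (c : ℤ) ≤ v x)) := by
    intro hec
    have hv1 : v (ϖ ^ i * k 0 0) = i := by
      rw [hvmul _ _ (pow_ne_zero _ hϖ0) h00ne, aux_v_pow hϖ0 hϖv hvmul, h00v]; ring
    by_cases h10 : k 1 0 = 0
    · rw [hx, h10, add_zero]
      exact Or.inr ⟨mul_ne_zero (pow_ne_zero _ hϖ0) h00ne, by omega⟩
    · have h : (c : ℤ) ≤ v (k 1 0) := (hk10).resolve_left h10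
      by_cases hx0 : x = 0
      · exact Or.inl hx0
      · refine Or.inr ⟨hx0, ?_⟩
        have := hvadd _ _ (mul_ne_zero (pow_ne_zero _ hϖ0) h00ne) h10 hx0
        rw [← hx] at this
        rw [hv1] at this
        omega
  -- facts about y
  have hyC : y ≠ 0 → 0 ≤ v y := by
    intro hy0
    by_cases h01 : k 0 1 = 0
    · rw [hy, h01, mul_zero, zero_add]; omega
    · have hv1 : v (ϖ ^ i * k 0 1) = i + v (k 0 1) := by
        rw [hvmul _ _ (pow_ne_zero _ hϖ0) h01, aux_v_pow hϖ0 hϖv hvmul]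
      have h01v : 0 ≤ v (k 0 1) := by
        rcases hint 0 1 with h | h
        · exact absurd h h01
        · exact h
      have := hvadd _ _ (mul_ne_zero (pow_ne_zero _ hϖ0) h01) h11ne hy0
      rw [← hy] at this
      rw [hv1] at this
      omega
  have hyD : y = 0 → i = 0 := by
    intro hy0
    have h01 : k 0 1 ≠ 0 := by
      intro h0
      rw [hy, h0, mul_zero, zero_add] at hy0
      exact h11ne hy0
    have hme : ϖ ^ i * k 0 1 = -(k 1 1) := by
      rw [hy] at hy0; linear_combination hy0
    have h01v : 0 ≤ v (k 0 1) := by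
      rcases hint 0 1 with h | h
      · exact absurd h h01
      · exact h
    have : v (ϖ ^ i * k 0 1) = v (k 1 1) := by
      rw [hme, aux_v_neg hvmul h11ne]
    rw [hvmul _ _ (pow_ne_zero _ hϖ0) h01, aux_v_pow hϖ0 hϖv hvmul, h11v] at this
    omega
  have hyE : 0 < i → y ≠ 0 ∧ v y = 0 := by
    intro hpos
    by_cases h01 : k 0 1 = 0
    · rw [hy, h01, mul_zero, zero_add]
      exact ⟨h11ne, h11v⟩
    · have h01v : 0 ≤ v (k 0 1) := by
        rcases hint 0 1 with h | h
        · exact absurd h h01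
        · exact h
      have hv1 : v (ϖ ^ i * k 0 1) = i + v (k 0 1) := by
        rw [hvmul _ _ (pow_ne_zero _ hϖ0) h01, aux_v_pow hϖ0 hϖv hvmul]
      have := aux_v_add_eq hvmul hvadd h11ne (mul_ne_zero (pow_ne_zero _ hϖ0) h01)
        (by rw [hv1, h11v]; omega)
      rw [add_comm] at this
      exact ⟨this.1, by rw [this.2, h11v]⟩
  -- main case analysis
  rw [e10, e11]
  by_cases hx0 : x = 0
  · have hicc : i = c := by
      by_contra hne
      exact (hxA (lt_of_le_of_ne hic hne)).1 hx0
    rw [hx0, mul_zero, if_pos rfl]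
    omega
  · rw [if_neg (mul_ne_zero hβ hx0)]
    by_cases hy0 : y = 0
    · rw [hy0, mul_zero, if_pos rfl]
      have := hyD hy0; omega
    · rw [if_neg (mul_ne_zero hβ hy0)]
      rw [hvmul _ _ hβ hx0, hvmul _ _ hβ hy0]
      rcases Nat.eq_zero_or_pos i with hi0 | hipos
      · subst hi0
        have hxv := (hxA (by omega)).2
        have hyv := hyC hy0
        rw [hxv]
        push_cast
        omega
      · rcases lt_or_eq_of_le hic with hlt | heq
        · have hxv := (hxA hlt).2
          have hyv := (hyE hipos).2
          rw [hxv, hyv]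
          omega
        · subst heq
          rcases hxB rfl with h | ⟨_, hxv⟩
          · exact absurd h hx0
          · have hyv := (hyE hipos).2
            rw [hyv]
            omega


lemma aux_e00 {F : Type*} [Field F] (a b' c' d' : F) :
    (!![a, b'; c', d'] : Matrix (Fin 2) (Fin 2) F) 0 0 = a := by simp
lemma aux_e10 {F : Type*} [Field F] (a b' c' d' : F) :
    (!![a, b'; c', d'] : Matrix (Fin 2) (Fin 2) F) 1 0 = c' := by simp
lemma aux_e11 {F : Type*} [Field F] (a b' c' d' : F) :
    (!![a, b'; c', d'] : Matrix (Fin 2) (Fin 2) F) 1 1 = d' := by simp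

lemma aux_int {F : Type*} [Field F] {v : F → ℤ} {a b' c' d' : F}
    (ha : a = 0 ∨ 0 ≤ v a) (hb : b' = 0 ∨ 0 ≤ v b')
    (hc' : c' = 0 ∨ 0 ≤ v c') (hd : d' = 0 ∨ 0 ≤ v d') :
    ∀ i' j', (!![a, b'; c', d'] : Matrix (Fin 2) (Fin 2) F) i' j' = 0 ∨
      0 ≤ v ((!![a, b'; c', d'] : Matrix (Fin 2) (Fin 2) F) i' j') := by
  intro i' j'
  fin_cases i' <;> fin_cases j' <;> simpa

theorem aux_exists
    (F : Type*) [Field F]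
    (v : F → ℤ) (ϖ : F)
    (hϖ0 : ϖ ≠ 0) (hϖv : v ϖ = 1)
    (hvmul : ∀ x y : F, x ≠ 0 → y ≠ 0 → v (x * y) = v x + v y)
    (hvadd : ∀ x y : F, x ≠ 0 → y ≠ 0 → x + y ≠ 0 → min (v x) (v y) ≤ v (x + y))
    (c : ℕ) (hc : 1 ≤ c)
    (M : Matrix (Fin 2) (Fin 2) F) (hMdet : M.det ≠ 0) :
    ∃ i : ℕ, i ≤ c ∧ ∃ b k : Matrix (Fin 2) (Fin 2) F,
        b 1 0 = 0 ∧ b.det ≠ 0 ∧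
        (∀ i' j', k i' j' = 0 ∨ 0 ≤ v (k i' j')) ∧ k.det ≠ 0 ∧ v k.det = 0 ∧
        (k 1 0 = 0 ∨ (c : ℤ) ≤ v (k 1 0)) ∧ (k 1 1 - 1 = 0 ∨ (c : ℤ) ≤ v (k 1 1 - 1)) ∧
        M = b * !![1, 0; ϖ ^ i, 1] * k := by
  have v1 : v (1 : F) = 0 := aux_v_one hvmul
  have vpc : v (-ϖ ^ c) = c := by
    rw [aux_v_neg hvmul (pow_ne_zero _ hϖ0), aux_v_pow hϖ0 hϖv hvmul]
  by_cases hd : M 1 0 = 0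
  · -- case d = 0 : i = c
    refine ⟨c, le_refl c, M, !![1, 0; -ϖ^c, 1], hd, hMdet, ?_, ?_, ?_, ?_, ?_, ?_⟩
    · exact aux_int (Or.inr (by omega)) (Or.inl rfl) (Or.inr (by omega)) (Or.inr (by omega))
    · simp [Matrix.det_fin_two_of]
    · simp [Matrix.det_fin_two_of, v1]
    · rw [aux_e10]; right; omega
    · rw [aux_e11]; left; ring
    · have huk : (!![1, 0; ϖ^c, 1] : Matrix (Fin 2) (Fin 2) F) * !![1, 0; -ϖ^c, 1] = 1 := by
        rw [Matrix.mul_fin_two, Matrix.one_fin_two]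
        norm_num
      rw [Matrix.mul_assoc, huk, Matrix.mul_one]
  · by_cases he : M 1 1 = 0
    · -- case e = 0 : i = 0
      have hN : (!![1, 0; ϖ^0, 1] : Matrix (Fin 2) (Fin 2) F) * !![1, -1; 0, 1] = !![1, -1; 1, 0] := by
        rw [Matrix.mul_fin_two]; norm_num
      obtain ⟨b, hb0, hbdet, hbN⟩ := aux_factor M !![1, -1; 1, 0] hMdet
        (by simp [Matrix.det_fin_two_of]) (M 1 0) (by rw [aux_e10]; ring) (by rw [aux_e11, he]; ring)
      refine ⟨0, Nat.zero_le c, b, !![1, -1; 0, 1], hb0, hbdet, ?_, ?_, ?_, ?_, ?_, ?_⟩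
      · exact aux_int (Or.inr (by omega)) (Or.inr (by rw [aux_v_neg hvmul one_ne_zero]; omega))
          (Or.inl rfl) (Or.inr (by omega))
      · simp [Matrix.det_fin_two_of]
      · simp [Matrix.det_fin_two_of, v1]
      · rw [aux_e10]; left; rfl
      · rw [aux_e11]; left; ring
      · rw [Matrix.mul_assoc, hN, ← hbN]
    · -- both nonzero
      obtain ⟨t, ht⟩ : ∃ t : ℤ, t = v (M 1 0) - v (M 1 1) := ⟨_, rfl⟩
      have hvdiv : v (M 1 0 / M 1 1) = t := by
        rw [div_eq_mul_inv, hvmul _ _ hd (inv_ne_zero he), aux_v_inv hvmul he]; omega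
      have hde : M 1 0 / M 1 1 ≠ 0 := div_ne_zero hd he
      rcases le_or_gt t 0 with htle | htpos
      · -- 2b : i = 0
        obtain ⟨s, hs⟩ : ∃ s : F, s = M 1 1 / M 1 0 - 1 := ⟨_, rfl⟩
        have hvdiv' : v (M 1 1 / M 1 0) = -t := by
          rw [div_eq_mul_inv, hvmul _ _ he (inv_ne_zero hd), aux_v_inv hvmul hd]; omega
        have hde' : M 1 1 / M 1 0 ≠ 0 := div_ne_zero he hd
        have hN : (!![1, 0; ϖ^0, 1] : Matrix (Fin 2) (Fin 2) F) * !![1, s; 0, 1]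
            = !![1, s; 1, s + 1] := by
          rw [Matrix.mul_fin_two]; norm_num
        obtain ⟨b, hb0, hbdet, hbN⟩ := aux_factor M !![1, s; 1, s + 1] hMdet
          (by simp [Matrix.det_fin_two_of]) (M 1 0) (by rw [aux_e10]; ring)
          (by rw [aux_e11, hs]; field_simp; ring)
        have hsv : s = 0 ∨ 0 ≤ v s := by
          by_cases hs0 : s = 0
          · exact Or.inl hs0
          · right
            have hne : M 1 1 / M 1 0 + -1 ≠ 0 := by
              intro h0; apply hs0; rw [hs, sub_eq_add_neg]; exact h0
            have hmin := hvadd _ _ hde' (by norm_num : (-1 : F) ≠ 0) hne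
            rw [aux_v_neg hvmul one_ne_zero, v1, hvdiv'] at hmin
            have hgoal : v (M 1 1 / M 1 0 + -1) = v s := by
              congr 1; rw [hs]; ring
            omega
        refine ⟨0, Nat.zero_le c, b, !![1, s; 0, 1], hb0, hbdet, ?_, ?_, ?_, ?_, ?_, ?_⟩
        · exact aux_int (Or.inr (by omega)) hsv (Or.inl rfl) (Or.inr (by omega))
        · simp [Matrix.det_fin_two_of]
        · simp [Matrix.det_fin_two_of, v1]
        · rw [aux_e10]; left; rfl
        · rw [aux_e11]; left; ring
        · rw [Matrix.mul_assoc, hN, ← hbN]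
      · rcases lt_or_ge t c with htlt | htge
        · -- 2c : 0 < i < c
          obtain ⟨i, hti⟩ : ∃ i : ℕ, (i : ℤ) = t := ⟨t.toNat, Int.toNat_of_nonneg (le_of_lt htpos)⟩
          obtain ⟨w, hw⟩ : ∃ w : F, w = M 1 0 / (M 1 1 * ϖ ^ i) := ⟨_, rfl⟩
          have hepi : M 1 1 * ϖ ^ i ≠ 0 := mul_ne_zero he (pow_ne_zero _ hϖ0)
          have hwne : w ≠ 0 := by rw [hw]; exact div_ne_zero hd hepi
          have hwv : v w = 0 := by
            rw [hw, div_eq_mul_inv, hvmul _ _ hd (inv_ne_zero hepi),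
              aux_v_inv hvmul hepi, hvmul _ _ he (pow_ne_zero _ hϖ0),
              aux_v_pow hϖ0 hϖv hvmul]
            omega
          have hN : (!![1, 0; ϖ^i, 1] : Matrix (Fin 2) (Fin 2) F) * !![w, 0; 0, 1]
              = !![w, 0; ϖ^i * w, 1] := by
            rw [Matrix.mul_fin_two]; norm_num
          obtain ⟨b, hb0, hbdet, hbN⟩ := aux_factor M !![w, 0; ϖ^i * w, 1] hMdet
            (by simp [Matrix.det_fin_two_of, hwne]) (M 1 1)
            (by rw [aux_e10, hw]; field_simp) (by rw [aux_e11]; ring)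
          refine ⟨i, by omega, b, !![w, 0; 0, 1], hb0, hbdet, ?_, ?_, ?_, ?_, ?_, ?_⟩
          · exact aux_int (Or.inr (by omega)) (Or.inl rfl) (Or.inl rfl) (Or.inr (by omega))
          · simp [Matrix.det_fin_two_of, hwne]
          · simp [Matrix.det_fin_two_of, hwv]
          · rw [aux_e10]; left; rfl
          · rw [aux_e11]; left; ring
          · rw [Matrix.mul_assoc, hN, ← hbN]
        · -- 2d : i = c
          obtain ⟨s, hs⟩ : ∃ s : F, s = M 1 0 / M 1 1 - ϖ ^ c := ⟨_, rfl⟩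
          have hN : (!![1, 0; ϖ^c, 1] : Matrix (Fin 2) (Fin 2) F) * !![1, 0; s, 1]
              = !![1, 0; ϖ^c + s, 1] := by
            rw [Matrix.mul_fin_two]; norm_num
          obtain ⟨b, hb0, hbdet, hbN⟩ := aux_factor M !![1, 0; ϖ^c + s, 1] hMdet
            (by simp [Matrix.det_fin_two_of]) (M 1 1)
            (by rw [aux_e10, hs]; field_simp; ring) (by rw [aux_e11]; ring)
          have hsv : s = 0 ∨ (c : ℤ) ≤ v s := by
            by_cases hs0 : s = 0
            · exact Or.inl hs0
            · right
              have hne : M 1 0 / M 1 1 + -ϖ^c ≠ 0 := by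
                intro h0; apply hs0; rw [hs, sub_eq_add_neg]; exact h0
              have hmin := hvadd _ _ hde (neg_ne_zero.mpr (pow_ne_zero _ hϖ0)) hne
              rw [vpc, hvdiv] at hmin
              have hgoal : v (M 1 0 / M 1 1 + -ϖ^c) = v s := by
                congr 1; rw [hs]; ring
              omega
          refine ⟨c, le_refl c, b, !![1, 0; s, 1], hb0, hbdet, ?_, ?_, ?_, ?_, ?_, ?_⟩
          · refine aux_int (Or.inr (by omega)) (Or.inl rfl) ?_ (Or.inr (by omega))
            rcases hsv with h | h
            · exact Or.inl h
            · exact Or.inr (by omega)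
          · simp [Matrix.det_fin_two_of]
          · simp [Matrix.det_fin_two_of, v1]
          · rw [aux_e10]; exact hsv
          · rw [aux_e11]; left; ring
          · rw [Matrix.mul_assoc, hN, ← hbN]

/-- For every `c ≥ 1`, `GL₂(F)` is the disjoint union over
`i = 0, …, c` of the double cosets `B(F)·[[1,0],[ϖⁱ,1]]·K₁(ϖᶜ)`: every invertible
matrix lies in exactly one of them. -/
theorem stmt_12
    (F : Type*) [Field F]
    (v : F → ℤ) (ϖ : F)
    (hϖ0 : ϖ ≠ 0) (hϖv : v ϖ = 1)
    (hvmul : ∀ x y : F, x ≠ 0 → y ≠ 0 → v (x * y) = v x + v y)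
    (hvadd : ∀ x y : F, x ≠ 0 → y ≠ 0 → x + y ≠ 0 → min (v x) (v y) ≤ v (x + y))
    (c : ℕ) (hc : 1 ≤ c) :
    ∀ M : Matrix (Fin 2) (Fin 2) F, M.det ≠ 0 →
      ∃! i : ℕ, i ≤ c ∧ ∃ b k : Matrix (Fin 2) (Fin 2) F,
        b 1 0 = 0 ∧ b.det ≠ 0 ∧
        (∀ i' j', k i' j' = 0 ∨ 0 ≤ v (k i' j')) ∧ k.det ≠ 0 ∧ v k.det = 0 ∧
        (k 1 0 = 0 ∨ (c : ℤ) ≤ v (k 1 0)) ∧ (k 1 1 - 1 = 0 ∨ (c : ℤ) ≤ v (k 1 1 - 1)) ∧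
        M = b * !![1, 0; ϖ ^ i, 1] * k := by
  intro M hMdet
  obtain ⟨i, hi⟩ := aux_exists F v ϖ hϖ0 hϖv hvmul hvadd c hc M hMdet
  refine ⟨i, hi, ?_⟩
  intro j hj
  obtain ⟨hjc, b, k, hb0, hbdet, hint, hkdet, hkv, hk10, hk11, hM⟩ := hj
  obtain ⟨hic, b', k', hb0', hbdet', hint', hkdet', hkv', hk10', hk11', hM'⟩ := hi
  have e1 := aux_inv hϖ0 hϖv hvmul hvadd hc M hjc hb0 hbdet hint hkdet hkv hk10 hk11 hM
  have e2 := aux_inv hϖ0 hϖv hvmul hvadd hc M hic hb0' hbdet' hint' hkdet' hkv' hk10' hk11' hM'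
  have hji : (j : ℤ) = (i : ℤ) := by rw [← e1, e2]
  omega
end
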